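/- arXiv:1109.5544 — 6 statements merged into one kernel-verified Lean document; each statement's English description precedes it below -/
import Mathlib

section
/- Every automorphism of the crossing graph of the diagonals of a convex m-gon (m ≥ 5), i.e., every bijection of the set of diagonals preserving the crossing relation in both directions, preserves the length of each diagonal, where the length of a diagonal is the minimum of the lengths of the two boundary paths connecting its endpoints. -/
/-- `x` lies strictly between `a` and `b` in the cyclic order on `ZMod m`. -/
def Pbetween (m : ℕ) (a x b : ZMod m) : Prop :=
  0 < (x - a).val ∧ (x - a).val < (b - a).val

/-- `d` is a diagonal of the convex `m`-gon with vertices `ZMod m`: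
an unordered pair of distinct, non-adjacent vertices. -/
def PIsDiag (m : ℕ) (d : Finset (ZMod m)) : Prop :=
  ∃ a b : ZMod m, d = {a, b} ∧ a ≠ b ∧ a - b ≠ 1 ∧ b - a ≠ 1

/-- Two diagonals cross: their endpoint pairs separate each other cyclically,
i.e. exactly one endpoint of the second lies strictly between the endpoints of the first. -/
def PCross (m : ℕ) (d e : Finset (ZMod m)) : Prop :=
  ∃ a b c d' : ZMod m, d = {a, b} ∧ e = {c, d'} ∧
    a ≠ b ∧ a ≠ c ∧ a ≠ d' ∧ b ≠ c ∧ b ≠ d' ∧ c ≠ d' ∧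
    Xor' (Pbetween m a c b) (Pbetween m a d' b)

lemma pairEq {α : Type*} [DecidableEq α] {a b c d : α}
    (h : ({a, b} : Finset α) = {c, d}) : (a = c ∧ b = d) ∨ (a = d ∧ b = c) := by
  have h' : ({a, b} : Set α) = {c, d} := by
    have := congrArg (fun s : Finset α => (s : Set α)) h
    simpa using this
  exact Set.pair_eq_pair_iff.mp h'

section
variable {m : ℕ} [NeZero m]

lemma valsub (u v : ZMod m) :
    (u - v).val = if v.val ≤ u.val then u.val - v.val else m + u.val - v.val := by
  split_ifs with h
  · exact ZMod.val_sub h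
  · push_neg at h
    have huv : v - u ≠ 0 := by
      intro h0
      have : v = u := sub_eq_zero.mp h0
      simp [this] at h
    have : u - v = -(v - u) := by ring
    rw [this, ZMod.neg_val, if_neg huv, ZMod.val_sub h.le]
    have := v.val_lt
    omega

lemma castval (x : ZMod m) : ((x.val : ℕ) : ZMod m) = x := by
  rw [ZMod.natCast_val, ZMod.cast_id]

lemma val_injlem {u v : ZMod m} (h : u.val = v.val) : u = v := by
  rw [← castval u, ← castval v, h]

/-- basic facts about a diagonal. -/
lemma diag_facts (hm : 5 ≤ m) {a b : ZMod m} (h1 : a ≠ b) (h2 : a - b ≠ 1) (h3 : b - a ≠ 1) :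
    2 ≤ (b - a).val ∧ (b - a).val ≤ m - 2 ∧ (a - b).val = m - (b - a).val := by
  haveI : Fact (1 < m) := ⟨by omega⟩
  have hne : b - a ≠ 0 := sub_ne_zero.mpr (Ne.symm h1)
  have h0 : (b - a).val ≠ 0 := fun h => hne (by rwa [ZMod.val_eq_zero] at h)
  have hone : (b - a).val ≠ 1 := fun h => h3 (by
    have := castval (b - a); rw [h] at this; simpa using this.symm)
  have hneg : (a - b).val = m - (b - a).val := by
    have : a - b = -(b - a) := by ring
    rw [this, ZMod.neg_val, if_neg hne]
  have hone' : (a - b).val ≠ 1 := fun h => h2 (by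
    have := castval (a - b); rw [h] at this; simpa using this.symm)
  have := (b - a).val_lt
  refine ⟨by omega, by omega, hneg⟩

lemma between_flip {a b x : ZMod m} (hab : a ≠ b) (hxa : x ≠ a) (hxb : x ≠ b) :
    Pbetween m b x a ↔ (b - a).val < (x - a).val := by
  have hne : b - a ≠ 0 := sub_ne_zero.mpr (Ne.symm hab)
  have hxane : x - a ≠ 0 := sub_ne_zero.mpr hxa
  have hi0 : (x - a).val ≠ 0 := fun h => hxane (by rwa [ZMod.val_eq_zero] at h)
  have hik : (x - a).val ≠ (b - a).val := fun h => hxb (by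
    have := val_injlem h; exact sub_left_injective this)
  have hxb' : (x - b).val = if (b-a).val ≤ (x-a).val then (x-a).val - (b-a).val
      else m + (x-a).val - (b-a).val := by
    have : x - b = (x - a) - (b - a) := by ring
    rw [this, valsub]
  have hab' : (a - b).val = m - (b - a).val := by
    have : a - b = -(b - a) := by ring
    rw [this, ZMod.neg_val, if_neg hne]
  have h1 := (x - a).val_lt
  have h2 := (b - a).val_lt
  have hk0 : (b - a).val ≠ 0 := fun h => hne (by rwa [ZMod.val_eq_zero] at h)
  unfold Pbetween
  rw [hxb', hab']
  split_ifs with h <;> omega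

lemma between_flip' {a b x : ZMod m} (hab : a ≠ b) (hxa : x ≠ a) (hxb : x ≠ b) :
    Pbetween m b x a ↔ ¬ Pbetween m a x b := by
  rw [between_flip hab hxa hxb]
  have hxane : x - a ≠ 0 := sub_ne_zero.mpr hxa
  have hi0 : (x - a).val ≠ 0 := fun h => hxane (by rwa [ZMod.val_eq_zero] at h)
  have hik : (x - a).val ≠ (b - a).val := fun h => hxb (by
    have := val_injlem h; exact sub_left_injective this)
  unfold Pbetween
  omega

end
section
variable {m : ℕ} [NeZero m]

lemma cross_iff (hm : 5 ≤ m) {a b : ZMod m} (hab : a ≠ b) (e : Finset (ZMod m)) :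
    PCross m {a, b} e ↔ ∃ i j : ℕ, 0 < i ∧ i < (b - a).val ∧ (b - a).val < j ∧ j < m ∧
      e = {a + (i : ZMod m), a + (j : ZMod m)} := by
  constructor
  · rintro ⟨a₀, b₀, c, d', hpair, he, h1, h2, h3, h4, h5, h6, hxor⟩
    -- normalize so that the Xor is w.r.t. (a, b)
    have key : (c ≠ a ∧ c ≠ b ∧ d' ≠ a ∧ d' ≠ b) ∧
        Xor' (Pbetween m a c b) (Pbetween m a d' b) := by
      rcases pairEq hpair with ⟨ha, hb⟩ | ⟨ha, hb⟩
      · subst ha; subst hb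
        exact ⟨⟨Ne.symm h2, Ne.symm h4, Ne.symm h3, Ne.symm h5⟩, hxor⟩
      · subst ha; subst hb
        refine ⟨⟨Ne.symm h4, Ne.symm h2, Ne.symm h5, Ne.symm h3⟩, ?_⟩
        rw [between_flip' hab (Ne.symm h4) (Ne.symm h2),
          between_flip' hab (Ne.symm h5) (Ne.symm h3)] at hxor
        rcases hxor with ⟨hp, hq⟩ | ⟨hp, hq⟩
        · right; push_neg at hq; exact ⟨hq, hp⟩
        · left; push_neg at hq; exact ⟨hq, hp⟩
    obtain ⟨⟨hca, hcb, hda, hdb⟩, hxor'⟩ := key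
    -- the "inner" point gives i, the "outer" gives j
    have main : ∀ x y : ZMod m, x ≠ a → x ≠ b → y ≠ a → y ≠ b →
        Pbetween m a x b → ¬ Pbetween m a y b →
        0 < (x - a).val ∧ (x - a).val < (b - a).val ∧ (b - a).val < (y - a).val ∧
          (y - a).val < m ∧ x = a + (((x - a).val : ℕ) : ZMod m) ∧
          y = a + (((y - a).val : ℕ) : ZMod m) := by
      intro x y hxa hxb hya hyb hx hy
      obtain ⟨hx1, hx2⟩ := hx
      have hyane : y - a ≠ 0 := sub_ne_zero.mpr hya
      have hy0 : (y - a).val ≠ 0 := fun h => hyane (by rwa [ZMod.val_eq_zero] at h)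
      have hyk : (y - a).val ≠ (b - a).val := fun h => hyb (by
        have := val_injlem h; exact sub_left_injective this)
      unfold Pbetween at hy
      refine ⟨hx1, hx2, by omega, (y - a).val_lt, ?_, ?_⟩
      · rw [castval]; ring
      · rw [castval]; ring
    rcases hxor' with ⟨hc, hd⟩ | ⟨hd, hc⟩
    · obtain ⟨p1, p2, p3, p4, p5, p6⟩ := main c d' hca hcb hda hdb hc hd
      exact ⟨(c - a).val, (d' - a).val, p1, p2, p3, p4, by rw [he, ← p5, ← p6]⟩
    · obtain ⟨p1, p2, p3, p4, p5, p6⟩ := main d' c hda hdb hca hcb hd hc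
      refine ⟨(d' - a).val, (c - a).val, p1, p2, p3, p4, ?_⟩
      rw [he, ← p5, ← p6, Finset.pair_comm]
  · rintro ⟨i, j, hi0, hik, hkj, hjm, rfl⟩
    have him : i < m := by have := (b - a).val_lt; omega
    have hvi : ((i : ZMod m)).val = i := ZMod.val_cast_of_lt him
    have hvj : ((j : ZMod m)).val = j := ZMod.val_cast_of_lt hjm
    have hvk : (b - a) = (((b - a).val : ℕ) : ZMod m) := (castval _).symm
    have hai : a ≠ a + (i : ZMod m) := by
      intro h
      have : (i : ZMod m) = 0 := by linear_combination -h
      rw [← hvi, this] at hi0; simp at hi0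
    have haj : a ≠ a + (j : ZMod m) := by
      intro h
      have : (j : ZMod m) = 0 := by linear_combination -h
      rw [← hvj, this] at hkj; simp at hkj
    have hbi : b ≠ a + (i : ZMod m) := by
      intro h
      have : b - a = (i : ZMod m) := by linear_combination h
      rw [this, hvi] at hik; omega
    have hbj : b ≠ a + (j : ZMod m) := by
      intro h
      have : b - a = (j : ZMod m) := by linear_combination h
      rw [this, hvj] at hkj; omega
    have hij : a + (i : ZMod m) ≠ a + (j : ZMod m) := by
      intro h
      have : (i : ZMod m) = (j : ZMod m) := by linear_combination h
      have := congrArg ZMod.val this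
      rw [hvi, hvj] at this; omega
    refine ⟨a, b, _, _, rfl, rfl, hab, hai, haj, hbi, hbj, hij, Or.inl ⟨?_, ?_⟩⟩
    · have : a + (i : ZMod m) - a = (i : ZMod m) := by ring
      unfold Pbetween
      rw [this, hvi]
      exact ⟨hi0, hik⟩
    · have : a + (j : ZMod m) - a = (j : ZMod m) := by ring
      unfold Pbetween
      rw [this, hvj]
      omega

end
section
variable {m : ℕ} [NeZero m]

lemma diag_of (hm : 5 ≤ m) (a : ZMod m) {i j : ℕ} (hi0 : 0 < i) (hij : i + 2 ≤ j)
    (hjm : j < m) : PIsDiag m {a + (i : ZMod m), a + (j : ZMod m)} := by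
  haveI : Fact (1 < m) := ⟨by omega⟩
  have hvi : ((i : ZMod m)).val = i := ZMod.val_cast_of_lt (by omega)
  have hvj : ((j : ZMod m)).val = j := ZMod.val_cast_of_lt hjm
  refine ⟨a + (i : ZMod m), a + (j : ZMod m), rfl, ?_, ?_, ?_⟩
  · intro h
    have : (i : ZMod m) = (j : ZMod m) := by linear_combination h
    have := congrArg ZMod.val this
    rw [hvi, hvj] at this; omega
  · intro h
    have h2 : (i : ZMod m) - (j : ZMod m) = 1 := by linear_combination h
    have := congrArg ZMod.val h2
    rw [valsub, ZMod.val_one, hvi, hvj] at this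
    split_ifs at this <;> omega
  · intro h
    have h2 : (j : ZMod m) - (i : ZMod m) = 1 := by linear_combination h
    have := congrArg ZMod.val h2
    rw [valsub, ZMod.val_one, hvi, hvj] at this
    split_ifs at this <;> omega

lemma count_lemma (hm : 5 ≤ m) {a b : ZMod m} (h1 : a ≠ b) (h2 : a - b ≠ 1) (h3 : b - a ≠ 1) :
    Nat.card {e : {d : Finset (ZMod m) // PIsDiag m d} // PCross m {a, b} e.1}
      = ((b - a).val - 1) * (m - (b - a).val - 1) := by
  classical
  set k := (b - a).val with hk
  obtain ⟨hk2, hkm, _⟩ := diag_facts hm h1 h2 h3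
  set s : Finset (ℕ × ℕ) := Finset.Ioo 0 k ×ˢ Finset.Ioo k m with hs
  have hmem : ∀ p : ℕ × ℕ, p ∈ s ↔ 0 < p.1 ∧ p.1 < k ∧ k < p.2 ∧ p.2 < m := by
    intro p; simp [hs, Finset.mem_product, and_assoc]
  let ψ : {p : ℕ × ℕ // p ∈ s} → {e : {d : Finset (ZMod m) // PIsDiag m d} // PCross m {a, b} e.1} :=
    fun p => ⟨⟨{a + (p.1.1 : ZMod m), a + (p.1.2 : ZMod m)},
      by
        obtain ⟨q1, q2, q3, q4⟩ := (hmem p.1).mp p.2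
        exact diag_of hm a q1 (by omega) q4⟩,
      by
        obtain ⟨q1, q2, q3, q4⟩ := (hmem p.1).mp p.2
        exact (cross_iff hm h1 _).mpr ⟨p.1.1, p.1.2, q1, q2, q3, q4, rfl⟩⟩
  have hbij : Function.Bijective ψ := by
    constructor
    · rintro ⟨⟨i, j⟩, hp⟩ ⟨⟨i', j'⟩, hp'⟩ h
      obtain ⟨q1, q2, q3, q4⟩ := (hmem _).mp hp
      obtain ⟨q1', q2', q3', q4'⟩ := (hmem _).mp hp'
      have heq : ({a + (i : ZMod m), a + (j : ZMod m)} : Finset (ZMod m))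
          = {a + (i' : ZMod m), a + (j' : ZMod m)} := congrArg (fun e => e.1.1) h
      have vv : ∀ u v : ℕ, u < m → v < m → a + (u : ZMod m) = a + (v : ZMod m) → u = v := by
        intro u v hu hv huv
        have : (u : ZMod m) = (v : ZMod m) := by linear_combination huv
        have := congrArg ZMod.val this
        rwa [ZMod.val_cast_of_lt hu, ZMod.val_cast_of_lt hv] at this
      rcases pairEq heq with ⟨e1, e2⟩ | ⟨e1, e2⟩
      · have := vv _ _ (by omega) (by omega) e1
        have := vv _ _ q4 q4' e2
        simp_all
      · have := vv _ _ (by omega) q4' e1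
        omega
    · rintro ⟨⟨e, hdiag⟩, hcross⟩
      obtain ⟨i, j, q1, q2, q3, q4, hepair⟩ := (cross_iff hm h1 e).mp hcross
      refine ⟨⟨(i, j), (hmem _).mpr ⟨q1, q2, q3, q4⟩⟩, ?_⟩
      apply Subtype.ext; apply Subtype.ext
      exact hepair.symm
  calc Nat.card {e : {d : Finset (ZMod m) // PIsDiag m d} // PCross m {a, b} e.1}
      = Nat.card {p : ℕ × ℕ // p ∈ s} := (Nat.card_congr (Equiv.ofBijective ψ hbij)).symm
    _ = s.card := Nat.card_eq_finsetCard s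
    _ = (k - 1) * (m - k - 1) := by
        rw [hs, Finset.card_product, Nat.card_Ioo, Nat.card_Ioo, Nat.sub_zero]

end
lemma arith_inj {m l l' : ℕ} (hl : 2 ≤ l) (hl2 : 2 * l ≤ m) (hl' : 2 ≤ l') (hl2' : 2 * l' ≤ m)
    (heq : (l - 1) * (m - l - 1) = (l' - 1) * (m - l' - 1)) : l = l' := by
  by_contra hne
  wlog hlt : l < l' generalizing l l'
  · exact this hl' hl2' hl hl2 heq.symm (Ne.symm hne) (by omega)
  have c1 : ((l : ℤ) - 1) * ((m : ℤ) - l - 1) = ((l' : ℤ) - 1) * ((m : ℤ) - l' - 1) := by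
    have e1 : ((l - 1 : ℕ) : ℤ) = (l : ℤ) - 1 := by push_cast [Nat.cast_sub (by omega : 1 ≤ l)]; ring
    have e2 : ((m - l - 1 : ℕ) : ℤ) = (m : ℤ) - l - 1 := by omega
    have e3 : ((l' - 1 : ℕ) : ℤ) = (l' : ℤ) - 1 := by omega
    have e4 : ((m - l' - 1 : ℕ) : ℤ) = (m : ℤ) - l' - 1 := by omega
    have := congrArg (fun n : ℕ => (n : ℤ)) heq
    push_cast at this
    rw [e1, e2, e3, e4] at this
    exact this
  have hpos : (0 : ℤ) < ((l' : ℤ) - l) * ((m : ℤ) - l - l') := by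
    apply mul_pos <;> [skip; skip] <;>
      · have h1 : (l : ℤ) < l' := by exact_mod_cast hlt
        have h2 : 2 * (l' : ℤ) ≤ m := by exact_mod_cast hl2'
        linarith
  nlinarith [c1, hpos]

lemma arith_min {m k k' : ℕ} (hm : 5 ≤ m) (hk : 2 ≤ k) (hkm : k ≤ m - 2)
    (hk' : 2 ≤ k') (hkm' : k' ≤ m - 2)
    (heq : (k - 1) * (m - k - 1) = (k' - 1) * (m - k' - 1)) :
    min k (m - k) = min k' (m - k') := by
  have sym : ∀ n : ℕ, 2 ≤ n → n ≤ m - 2 →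
      (min n (m - n) - 1) * (m - min n (m - n) - 1) = (n - 1) * (m - n - 1) := by
    intro n h1 h2
    rcases le_total n (m - n) with h | h
    · rw [min_eq_left h]
    · rw [min_eq_right h]
      have : m - (m - n) = n := by omega
      rw [this, Nat.mul_comm]
  have h1 := sym k hk hkm
  have h2 := sym k' hk' hkm'
  exact arith_inj (m := m) (by omega) (by omega) (by omega) (by omega) (by rw [h1, h2, heq])


/-- Every crossing-preserving bijection of the diagonals of a convex `m`-gon (`m ≥ 5`)
preserves the length of each diagonal. -/
theorem stmt_0 (m : ℕ) (hm : 5 ≤ m)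
    (f : {d : Finset (ZMod m) // PIsDiag m d} ≃ {d : Finset (ZMod m) // PIsDiag m d})
    (hf : ∀ d e, PCross m d.1 e.1 ↔ PCross m (f d).1 (f e).1) :
    ∀ (d : {d : Finset (ZMod m) // PIsDiag m d}) (a b a' b' : ZMod m),
      d.1 = {a, b} → (f d).1 = {a', b'} →
      min (a - b).val (b - a).val = min (a' - b').val (b' - a').val := by
  haveI : NeZero m := ⟨by omega⟩
  intro d a b a' b' hd hfd
  -- extract diagonal properties for the given representatives
  have props : ∀ (x y : ZMod m) (dd : Finset (ZMod m)), PIsDiag m dd → dd = {x, y} →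
      x ≠ y ∧ x - y ≠ 1 ∧ y - x ≠ 1 := by
    rintro x y dd ⟨u, v, huv, p1, p2, p3⟩ rfl
    rcases pairEq huv with ⟨rfl, rfl⟩ | ⟨rfl, rfl⟩
    · exact ⟨p1, p2, p3⟩
    · exact ⟨Ne.symm p1, p3, p2⟩
  obtain ⟨h1, h2, h3⟩ := props a b d.1 d.2 hd
  obtain ⟨h1', h2', h3'⟩ := props a' b' (f d).1 (f d).2 hfd
  -- crossing-set cardinalities agree
  have transfer : Nat.card {e : {d : Finset (ZMod m) // PIsDiag m d} // PCross m d.1 e.1}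
      = Nat.card {e : {d : Finset (ZMod m) // PIsDiag m d} // PCross m (f d).1 e.1} := by
    apply Nat.card_congr
    refine ⟨fun e => ⟨f e.1, (hf d e.1).mp e.2⟩, fun e => ⟨f.symm e.1, ?_⟩, ?_, ?_⟩
    · have := (hf d (f.symm e.1)).mpr
      simp only [Equiv.apply_symm_apply] at this
      exact this e.2
    · intro e; apply Subtype.ext; simp
    · intro e; apply Subtype.ext; simp
  rw [hd] at transfer
  rw [hfd] at transfer
  rw [count_lemma hm h1 h2 h3, count_lemma hm h1' h2' h3'] at transfer
  obtain ⟨hk2, hkm, hneg⟩ := diag_facts hm h1 h2 h3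
  obtain ⟨hk2', hkm', hneg'⟩ := diag_facts hm h1' h2' h3'
  rw [hneg, hneg', min_comm ((m : ℕ) - (b - a).val), min_comm ((m : ℕ) - (b' - a').val)]
  exact arith_min hm hk2 hkm hk2' hkm' transfer
end

section
/- For a convex m-gon with m ≥ 5, two diagonals share a common endpoint if and only if there exists a diagonal of length 2 crossing both of them. -/
section Aux

variable {m : ℕ}

private lemma aux_val_small (hm : 5 ≤ m) (k : ℕ) (hk : k < m) : ((k : ZMod m)).val = k :=
  ZMod.val_cast_of_lt hk

private lemma aux_eq_of_val (hm : 5 ≤ m) {x : ZMod m} {k : ℕ} (hk : k < m) (h : x.val = k) :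
    x = (k : ZMod m) := by
  haveI : NeZero m := ⟨by omega⟩
  apply ZMod.val_injective
  rw [h, ZMod.val_cast_of_lt hk]

private lemma aux_val_one (hm : 5 ≤ m) : (1 : ZMod m).val = 1 := by
  have := aux_val_small hm 1 (by omega); simpa using this

private lemma aux_val_two (hm : 5 ≤ m) : (2 : ZMod m).val = 2 := by
  have := aux_val_small hm 2 (by omega); push_cast at this; exact this

private lemma aux_val_neg_one (hm : 5 ≤ m) : (-1 : ZMod m).val = m - 1 := by
  haveI : NeZero m := ⟨by omega⟩
  rw [ZMod.neg_val, if_neg, aux_val_one hm]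
  intro h
  have := aux_val_one hm
  rw [h, ZMod.val_zero] at this
  omega

private lemma aux_val_neg_two (hm : 5 ≤ m) : (-2 : ZMod m).val = m - 2 := by
  haveI : NeZero m := ⟨by omega⟩
  rw [ZMod.neg_val, if_neg, aux_val_two hm]
  intro h
  have := aux_val_two hm
  rw [h, ZMod.val_zero] at this
  omega

private lemma aux_between_iff1 (hm : 5 ≤ m) (a x : ZMod m) :
    Pbetween m a x (a + 2) ↔ x = a + 1 := by
  haveI : NeZero m := ⟨by omega⟩
  unfold Pbetween
  have h2 : (a + 2 - a) = (2 : ZMod m) := by ring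
  rw [h2, aux_val_two hm]
  constructor
  · rintro ⟨h0, h1⟩
    have hv : (x - a).val = 1 := by omega
    have := aux_eq_of_val hm (k := 1) (by omega) hv
    push_cast at this
    rw [sub_eq_iff_eq_add] at this
    rw [this]; ring
  · rintro rfl
    have : (a + 1 - a) = (1 : ZMod m) := by ring
    rw [this, aux_val_one hm]
    omega

private lemma aux_between_iff2 (hm : 5 ≤ m) (a x : ZMod m) (hxa : x ≠ a) (hxa2 : x ≠ a + 2) :
    Pbetween m (a + 2) x a ↔ x ≠ a + 1 := by
  haveI : NeZero m := ⟨by omega⟩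
  unfold Pbetween
  have h2 : (a - (a + 2)) = (-2 : ZMod m) := by ring
  rw [h2, aux_val_neg_two hm]
  have hlt : (x - (a + 2)).val < m := ZMod.val_lt _
  have hpos : 0 < (x - (a + 2)).val := by
    rw [ZMod.val_pos, sub_ne_zero]; exact hxa2
  constructor
  · rintro ⟨h0, h1⟩ rfl
    have : (a + 1 - (a + 2)) = (-1 : ZMod m) := by ring
    rw [this, aux_val_neg_one hm] at h1
    omega
  · intro hne
    refine ⟨hpos, ?_⟩
    have hne1 : (x - (a + 2)).val ≠ m - 1 := by
      intro h
      have : x - (a + 2) = (-1 : ZMod m) := by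
        apply ZMod.val_injective
        rw [h, aux_val_neg_one hm]
      apply hne
      have := sub_eq_iff_eq_add.mp this
      rw [this]; ring
    have hne2 : (x - (a + 2)).val ≠ m - 2 := by
      intro h
      have : x - (a + 2) = (-2 : ZMod m) := by
        apply ZMod.val_injective
        rw [h, aux_val_neg_two hm]
      apply hxa
      have := sub_eq_iff_eq_add.mp this
      rw [this]; ring
    omega

private lemma aux_pair_cases {α : Type*} [DecidableEq α] {a b c d : α}
    (h : ({a, b} : Finset α) = {c, d}) (hab : a ≠ b) :
    (a = c ∧ b = d) ∨ (a = d ∧ b = c) := by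
  have ha : a ∈ ({c, d} : Finset α) := h ▸ Finset.mem_insert_self a {b}
  have hb : b ∈ ({c, d} : Finset α) := h ▸ Finset.mem_insert_of_mem (Finset.mem_singleton_self b)
  simp only [Finset.mem_insert, Finset.mem_singleton] at ha hb
  rcases ha with rfl | rfl <;> rcases hb with rfl | rfl <;> tauto

/-- If the short diagonal `{a, a+2}` crosses `d`, then `a+1 ∈ d`. -/
private lemma aux_mid_mem (hm : 5 ≤ m) (a : ZMod m) (d : Finset (ZMod m))
    (h : PCross m {a, a + 2} d) : a + 1 ∈ d := by
  obtain ⟨a', b', c, d', hg, hd, h1, h2, h3, h4, h5, h6, hx⟩ := h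
  have hane : a ≠ a + 2 := by
    intro h
    have h2' : (2 : ZMod m) = 0 := by linear_combination -h
    have := aux_val_two hm
    rw [h2', ZMod.val_zero] at this
    omega
  rcases aux_pair_cases hg hane with ⟨ha, hb⟩ | ⟨ha, hb⟩
  · rw [← ha, ← hb] at hx
    rw [aux_between_iff1 hm, aux_between_iff1 hm] at hx
    rw [hd]
    rcases hx with ⟨hc, _⟩ | ⟨hd', _⟩
    · rw [← hc]; exact Finset.mem_insert_self _ _
    · rw [← hd']; exact Finset.mem_insert_of_mem (Finset.mem_singleton_self _)
  · rw [← ha, ← hb] at hx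
    have hca : c ≠ a := fun h => h4 (ha ▸ h.symm)
    have hca2 : c ≠ a + 2 := fun h => h2 (hb ▸ h.symm)
    have hda : d' ≠ a := fun h => h5 (ha ▸ h.symm)
    have hda2 : d' ≠ a + 2 := fun h => h3 (hb ▸ h.symm)
    rw [aux_between_iff2 hm a c hca hca2,
        aux_between_iff2 hm a d' hda hda2] at hx
    rw [hd]
    rcases hx with ⟨_, hd'⟩ | ⟨_, hc⟩
    · have : d' = a + 1 := not_not.mp hd'
      rw [← this]; exact Finset.mem_insert_of_mem (Finset.mem_singleton_self _)
    · have : c = a + 1 := not_not.mp hc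
      rw [← this]; exact Finset.mem_insert_self _ _

/-- `{v-1, v+1}` crosses any diagonal through `v`. -/
private lemma aux_cross_of_mem (hm : 5 ≤ m) (v : ZMod m) (d : Finset (ZMod m))
    (hd : PIsDiag m d) (hv : v ∈ d) : PCross m {v - 1, v + 1} d := by
  haveI : NeZero m := ⟨by omega⟩
  have hval1 := aux_val_one (m := m) hm
  have hval2 := aux_val_two (m := m) hm
  have hval3 : (3 : ZMod m).val = 3 := by
    have := aux_val_small hm 3 (by omega); push_cast at this; exact this
  have hne2 : (2 : ZMod m) ≠ 0 := by intro h; rw [h, ZMod.val_zero] at hval2; omega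
  have hne1 : (1 : ZMod m) ≠ 0 := by intro h; rw [h, ZMod.val_zero] at hval1; omega
  obtain ⟨x, y, hdxy, hxy, hxy1, hyx1⟩ := hd
  -- find the other endpoint u with d = {v, u}
  rw [hdxy] at hv
  simp only [Finset.mem_insert, Finset.mem_singleton] at hv
  obtain ⟨u, hdu, huv, huv1, hvu1⟩ :
      ∃ u : ZMod m, d = {v, u} ∧ u ≠ v ∧ u - v ≠ 1 ∧ v - u ≠ 1 := by
    rcases hv with rfl | rfl
    · exact ⟨y, hdxy, fun h => hxy h.symm, hyx1, hxy1⟩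
    · exact ⟨x, by rw [hdxy, Finset.pair_comm], hxy, hxy1, hyx1⟩
  refine ⟨v - 1, v + 1, v, u, rfl, hdu, ?_, ?_, ?_, ?_, ?_, fun h => huv h.symm, ?_⟩
  · intro h; apply hne2; linear_combination -h
  · intro h; apply hne1; linear_combination -h
  · intro h; apply hvu1; linear_combination h
  · intro h; apply hne1; linear_combination h
  · intro h; apply huv1; linear_combination -h
  · have heq : v + 1 = (v - 1) + 2 := by ring
    rw [heq, aux_between_iff1 hm, aux_between_iff1 hm]
    left
    constructor
    · ring
    · intro h
      apply huv
      linear_combination h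

end Aux

/-- Two diagonals of a convex `m`-gon (`m ≥ 5`) share a common endpoint iff
there exists a diagonal of length 2 crossing both of them. -/
theorem stmt_1 (m : ℕ) (hm : 5 ≤ m) (d e : Finset (ZMod m))
    (hd : PIsDiag m d) (he : PIsDiag m e) :
    (d ∩ e).Nonempty ↔
      ∃ g : Finset (ZMod m), PIsDiag m g ∧
        (∃ a b : ZMod m, g = {a, b} ∧ min (a - b).val (b - a).val = 2) ∧
        PCross m g d ∧ PCross m g e := by
  haveI : NeZero m := ⟨by omega⟩
  have hval1 := aux_val_one (m := m) hm
  have hval2 := aux_val_two (m := m) hm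
  have hval3 : (3 : ZMod m).val = 3 := by
    have := aux_val_small hm 3 (by omega); push_cast at this; exact this
  constructor
  · rintro ⟨v, hv⟩
    rw [Finset.mem_inter] at hv
    refine ⟨{v - 1, v + 1}, ?_, ?_, aux_cross_of_mem hm v d hd hv.1,
      aux_cross_of_mem hm v e he hv.2⟩
    · refine ⟨v - 1, v + 1, rfl, ?_, ?_, ?_⟩
      · intro h
        have h0 : (2 : ZMod m) = 0 := by linear_combination -h
        rw [h0, ZMod.val_zero] at hval2; omega
      · intro h
        have h0 : (3 : ZMod m) = 0 := by linear_combination -h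
        rw [h0, ZMod.val_zero] at hval3; omega
      · intro h
        have h0 : (1 : ZMod m) = 0 := by linear_combination h
        rw [h0, ZMod.val_zero] at hval1; omega
    · refine ⟨v - 1, v + 1, rfl, ?_⟩
      have ha : (v - 1) - (v + 1) = (-2 : ZMod m) := by ring
      have hb : (v + 1) - (v - 1) = (2 : ZMod m) := by ring
      rw [ha, hb, aux_val_neg_two hm, hval2]
      omega
  · rintro ⟨g, hgdiag, ⟨u, v, hguv, hmin⟩, hcd, hce⟩
    have hcase : (v - u).val = 2 ∨ (u - v).val = 2 := by
      rcases min_cases ((u - v).val) ((v - u).val) with ⟨h1, _⟩ | ⟨h1, _⟩ <;>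
        rw [h1] at hmin <;> tauto
    rcases hcase with h2 | h2
    · have hv : v = u + 2 := by
        have : v - u = (2 : ZMod m) := by
          apply ZMod.val_injective; rw [h2, hval2]
        have := sub_eq_iff_eq_add.mp this
        rw [this]; ring
      rw [hguv, hv] at hcd hce
      exact ⟨u + 1, Finset.mem_inter.mpr ⟨aux_mid_mem hm u d hcd, aux_mid_mem hm u e hce⟩⟩
    · have hu : u = v + 2 := by
        have : u - v = (2 : ZMod m) := by
          apply ZMod.val_injective; rw [h2, hval2]
        have := sub_eq_iff_eq_add.mp this
        rw [this]; ring
      rw [hguv, hu, Finset.pair_comm] at hcd hce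
      exact ⟨v + 1, Finset.mem_inter.mpr ⟨aux_mid_mem hm v d hcd, aux_mid_mem hm v e hce⟩⟩
end

section
/- Let F be a complete simplicial fan in R^n with generator set A, and suppose ω: A → R_{>0} satisfies: for every pair of adjacent maximal cones C₁, C₂ with linear dependence λ supported on C₁ ∪ C₂ (positive on the generators of C₁\C₂ and C₂\C₁), one has Σ_v λ(v)ω(v) > 0. Then for each maximal cone C, the affine hyperplane through the points {v/ω(v) : v generator of C} strictly separates the origin from the points w/ω(w) for generators w of any adjacent maximal cone not in C; i.e., the unique affine dependence among {0} ∪ {v/ω(v) : v ∈ C₁ ∪ C₂} has the coefficient of the origin of opposite sign to the coefficients of the points of C₁\C₂ and C₂\C₁. -/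
lemma findep {n : ℕ} (C : Finset (Fin n → ℝ))
    (h : LinearIndependent ℝ (fun v : C => (v : Fin n → ℝ)))
    (g : (Fin n → ℝ) → ℝ) (hg : ∑ v ∈ C, g v • v = 0) :
    ∀ v ∈ C, g v = 0 := by
  intro v hv
  have := Fintype.linearIndependent_iff.mp h (fun i => g i) ?_ ⟨v, hv⟩
  · exact this
  · rw [← Finset.sum_attach C (fun v => g v • v)] at hg
    exact hg

lemma aux_mixed {n : ℕ} (C₁ C₂ : Finset (Fin n → ℝ)) (a b : Fin n → ℝ)
    (hind1 : LinearIndependent ℝ (fun v : C₁ => (v : Fin n → ℝ)))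
    (hface : ∀ x : Fin n → ℝ,
      (∃ c : (Fin n → ℝ) → ℝ, (∀ v, 0 ≤ c v) ∧ x = ∑ v ∈ C₁, c v • v) →
      (∃ c : (Fin n → ℝ) → ℝ, (∀ v, 0 ≤ c v) ∧ x = ∑ v ∈ C₂, c v • v) →
      (∃ c : (Fin n → ℝ) → ℝ, (∀ v, 0 ≤ c v) ∧ x = ∑ v ∈ C₁ ∩ C₂, c v • v))
    (ha : C₁ \ C₂ = {a}) (hb : C₂ \ C₁ = {b})
    (lam : (Fin n → ℝ) → ℝ)
    (hls : ∑ v ∈ C₁ ∪ C₂, lam v • v = 0)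
    (hla : 0 < lam a) (hlb : lam b < 0) : False := by
  have haC : a ∈ C₁ ∧ a ∉ C₂ := by
    have : a ∈ C₁ \ C₂ := by rw [ha]; exact Finset.mem_singleton_self a
    exact ⟨(Finset.mem_sdiff.mp this).1, (Finset.mem_sdiff.mp this).2⟩
  have hbC : b ∈ C₂ ∧ b ∉ C₁ := by
    have : b ∈ C₂ \ C₁ := by rw [hb]; exact Finset.mem_singleton_self b
    exact ⟨(Finset.mem_sdiff.mp this).1, (Finset.mem_sdiff.mp this).2⟩
  have hU1 : C₁ ∪ C₂ = insert b C₁ := by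
    ext x
    simp only [Finset.mem_union, Finset.mem_insert]
    constructor
    · rintro (h | h)
      · exact Or.inr h
      · by_cases hx : x ∈ C₁
        · exact Or.inr hx
        · left
          have : x ∈ C₂ \ C₁ := Finset.mem_sdiff.mpr ⟨h, hx⟩
          rw [hb] at this; exact Finset.mem_singleton.mp this
    · rintro (h | h)
      · exact Or.inr (h ▸ hbC.1)
      · exact Or.inl h
  have hU2 : C₁ ∪ C₂ = insert a C₂ := by
    ext x
    simp only [Finset.mem_union, Finset.mem_insert]
    constructor
    · rintro (h | h)
      · by_cases hx : x ∈ C₂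
        · exact Or.inr hx
        · left
          have : x ∈ C₁ \ C₂ := Finset.mem_sdiff.mpr ⟨h, hx⟩
          rw [ha] at this; exact Finset.mem_singleton.mp this
      · exact Or.inr h
    · rintro (h | h)
      · exact Or.inl (h ▸ haC.1)
      · exact Or.inr h
  have hC1 : C₁ = insert a (C₁ ∩ C₂) := by
    ext x
    simp only [Finset.mem_insert, Finset.mem_inter]
    constructor
    · intro h
      by_cases hx : x ∈ C₂
      · exact Or.inr ⟨h, hx⟩
      · left
        have : x ∈ C₁ \ C₂ := Finset.mem_sdiff.mpr ⟨h, hx⟩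
        rw [ha] at this; exact Finset.mem_singleton.mp this
    · rintro (h | h)
      · exact h ▸ haC.1
      · exact h.1
  set p : (Fin n → ℝ) → ℝ := fun v => max (lam v) 0 with hp
  set m : (Fin n → ℝ) → ℝ := fun v => max (-lam v) 0 with hm
  have hp0 : ∀ v, 0 ≤ p v := fun v => le_max_right _ _
  have hm0 : ∀ v, 0 ≤ m v := fun v => le_max_right _ _
  have hpm : ∀ v, lam v = p v - m v := by
    intro v; simp only [hp, hm]
    rcases le_total (lam v) 0 with h | h
    · rw [max_eq_right h, max_eq_left (by linarith)]; ring
    · rw [max_eq_left h, max_eq_right (by linarith)]; ring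
  have hx : ∑ v ∈ C₁ ∪ C₂, p v • v = ∑ v ∈ C₁ ∪ C₂, m v • v := by
    have : ∑ v ∈ C₁ ∪ C₂, (p v • v - m v • v) = 0 := by
      rw [← hls]
      apply Finset.sum_congr rfl
      intro v _
      rw [hpm v, sub_smul]
    rwa [Finset.sum_sub_distrib, sub_eq_zero] at this
  have hpb : p b = 0 := by simp only [hp]; exact max_eq_right hlb.le
  have hma : m a = 0 := by simp only [hm]; exact max_eq_right (by linarith)
  set x := ∑ v ∈ C₁, p v • v with hxdef
  have hx1 : ∑ v ∈ C₁ ∪ C₂, p v • v = x := by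
    rw [hU1, Finset.sum_insert hbC.2, hpb, zero_smul, zero_add]
  have hx2 : x = ∑ v ∈ C₂, m v • v := by
    rw [← hx1, hx, hU2, Finset.sum_insert haC.2, hma, zero_smul, zero_add]
  obtain ⟨c, hc0, hcx⟩ := hface x ⟨p, hp0, rfl⟩ ⟨m, hm0, hx2⟩
  have haI : a ∉ C₁ ∩ C₂ := fun h => haC.2 (Finset.mem_inter.mp h).2
  set c' : (Fin n → ℝ) → ℝ := fun v => if v = a then 0 else c v with hc'
  have hcx' : x = ∑ v ∈ C₁, c' v • v := by
    rw [hC1, Finset.sum_insert haI]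
    simp only [hc', if_pos rfl, zero_smul, zero_add]
    rw [hcx]
    apply Finset.sum_congr rfl
    intro v hv
    rw [if_neg]
    rintro rfl
    exact haI hv
  have hzero : ∀ v ∈ C₁, p v - c' v = 0 := by
    apply findep C₁ hind1
    have : ∑ v ∈ C₁, (p v - c' v) • v = ∑ v ∈ C₁, p v • v - ∑ v ∈ C₁, c' v • v := by
      rw [← Finset.sum_sub_distrib]
      exact Finset.sum_congr rfl (fun v _ => sub_smul _ _ _)
    rw [this, ← hxdef, ← hcx', sub_self]
  have h1 := hzero a haC.1
  simp only [hc', if_pos rfl] at h1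
  have h3 : lam a ≤ p a := le_max_left _ _
  linarith

/-- Lemma on polytopality of complete simplicial fans: if `ω : A → ℝ_{>0}` is such that for
every pair of adjacent maximal cones the canonical linear dependence `λ` (positive on the two
generators not shared) has `Σ λ(v) ω(v) > 0`, then for every adjacent pair the (unique) affine
dependence among the origin and the points `v/ω(v)` has the coefficient of the origin of
opposite sign to the coefficients of the generators in the symmetric difference. -/
theorem stmt_13 (n : ℕ) (A : Finset (Fin n → ℝ)) (M : Finset (Finset (Fin n → ℝ)))
    (hA0 : (0 : Fin n → ℝ) ∉ A)
    (hsub : ∀ C ∈ M, C ⊆ A)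
    (hcard : ∀ C ∈ M, C.card = n)
    (hind : ∀ C ∈ M, LinearIndependent ℝ (fun v : C => (v : Fin n → ℝ)))
    (hcover : ∀ x : Fin n → ℝ, ∃ C ∈ M, ∃ c : (Fin n → ℝ) → ℝ,
      (∀ v, 0 ≤ c v) ∧ x = ∑ v ∈ C, c v • v)
    (hface : ∀ C₁ ∈ M, ∀ C₂ ∈ M, ∀ x : Fin n → ℝ,
      (∃ c : (Fin n → ℝ) → ℝ, (∀ v, 0 ≤ c v) ∧ x = ∑ v ∈ C₁, c v • v) →
      (∃ c : (Fin n → ℝ) → ℝ, (∀ v, 0 ≤ c v) ∧ x = ∑ v ∈ C₂, c v • v) →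
      (∃ c : (Fin n → ℝ) → ℝ, (∀ v, 0 ≤ c v) ∧ x = ∑ v ∈ C₁ ∩ C₂, c v • v))
    (ω : (Fin n → ℝ) → ℝ) (hω : ∀ v ∈ A, 0 < ω v)
    (hpos : ∀ C₁ ∈ M, ∀ C₂ ∈ M, C₁ ≠ C₂ → (C₁ ∩ C₂).card = n - 1 →
      ∀ lam : (Fin n → ℝ) → ℝ,
        (∀ v, v ∉ C₁ ∪ C₂ → lam v = 0) →
        (∑ v ∈ C₁ ∪ C₂, lam v • v = 0) →
        (∀ v ∈ (C₁ \ C₂) ∪ (C₂ \ C₁), 0 < lam v) →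
        0 < ∑ v ∈ C₁ ∪ C₂, lam v * ω v) :
    ∀ C₁ ∈ M, ∀ C₂ ∈ M, C₁ ≠ C₂ → (C₁ ∩ C₂).card = n - 1 →
      ∀ (μ : (Fin n → ℝ) → ℝ) (μ₀ : ℝ),
        (∀ v, v ∉ C₁ ∪ C₂ → μ v = 0) →
        (∑ v ∈ C₁ ∪ C₂, μ v • (ω v)⁻¹ • v = 0) →
        (μ₀ + ∑ v ∈ C₁ ∪ C₂, μ v = 0) →
        (μ₀ ≠ 0 ∨ ∃ v ∈ C₁ ∪ C₂, μ v ≠ 0) →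
        ∀ v ∈ (C₁ \ C₂) ∪ (C₂ \ C₁), μ₀ * μ v < 0 := by
  intro C₁ hC₁ C₂ hC₂ hne hcap μ μ₀ hμ0 hsum haff hnt w hw
  -- n ≥ 1
  have hn : 1 ≤ n := by
    by_contra h
    push_neg at h
    interval_cases n
    have h1 : C₁ = ∅ := Finset.card_eq_zero.mp (hcard C₁ hC₁)
    have h2 : C₂ = ∅ := Finset.card_eq_zero.mp (hcard C₂ hC₂)
    exact hne (h1.trans h2.symm)
  have hωU : ∀ v ∈ C₁ ∪ C₂, 0 < ω v := by
    intro v hv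
    rcases Finset.mem_union.mp hv with h | h
    · exact hω v (hsub C₁ hC₁ h)
    · exact hω v (hsub C₂ hC₂ h)
  set lam : (Fin n → ℝ) → ℝ := fun v => μ v * (ω v)⁻¹ with hlam
  have hμlam : ∀ v ∈ C₁ ∪ C₂, μ v = lam v * ω v := by
    intro v hv
    simp only [hlam]
    rw [mul_assoc, inv_mul_cancel₀ (hωU v hv).ne', mul_one]
  have hlamsum : ∑ v ∈ C₁ ∪ C₂, lam v • v = 0 := by
    rw [← hsum]
    exact Finset.sum_congr rfl (fun v _ => (smul_smul _ _ _).symm)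
  -- the two special generators
  have hcard1 : (C₁ \ C₂).card = 1 := by
    have h := Finset.card_inter_add_card_sdiff C₁ C₂
    rw [hcap, hcard C₁ hC₁] at h
    omega
  have hcard2 : (C₂ \ C₁).card = 1 := by
    have h := Finset.card_inter_add_card_sdiff C₂ C₁
    rw [Finset.inter_comm, hcap, hcard C₂ hC₂] at h
    omega
  obtain ⟨a, ha⟩ := Finset.card_eq_one.mp hcard1
  obtain ⟨b, hb⟩ := Finset.card_eq_one.mp hcard2
  have haC : a ∈ C₁ ∧ a ∉ C₂ := by
    have : a ∈ C₁ \ C₂ := by rw [ha]; exact Finset.mem_singleton_self a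
    exact ⟨(Finset.mem_sdiff.mp this).1, (Finset.mem_sdiff.mp this).2⟩
  have hbC : b ∈ C₂ ∧ b ∉ C₁ := by
    have : b ∈ C₂ \ C₁ := by rw [hb]; exact Finset.mem_singleton_self b
    exact ⟨(Finset.mem_sdiff.mp this).1, (Finset.mem_sdiff.mp this).2⟩
  have hU1 : C₁ ∪ C₂ = insert b C₁ := by
    ext x
    simp only [Finset.mem_union, Finset.mem_insert]
    constructor
    · rintro (h | h)
      · exact Or.inr h
      · by_cases hx : x ∈ C₁
        · exact Or.inr hx
        · left
          have : x ∈ C₂ \ C₁ := Finset.mem_sdiff.mpr ⟨h, hx⟩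
          rw [hb] at this; exact Finset.mem_singleton.mp this
    · rintro (h | h)
      · exact Or.inr (h ▸ hbC.1)
      · exact Or.inl h
  have hU2 : C₁ ∪ C₂ = insert a C₂ := by
    ext x
    simp only [Finset.mem_union, Finset.mem_insert]
    constructor
    · rintro (h | h)
      · by_cases hx : x ∈ C₂
        · exact Or.inr hx
        · left
          have : x ∈ C₁ \ C₂ := Finset.mem_sdiff.mpr ⟨h, hx⟩
          rw [ha] at this; exact Finset.mem_singleton.mp this
      · exact Or.inr h
    · rintro (h | h)
      · exact Or.inl (h ▸ haC.1)
      · exact Or.inr h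
  -- lam a ≠ 0 and lam b ≠ 0
  have key : ∀ (y : Fin n → ℝ) (C : Finset (Fin n → ℝ)), C ∈ M → y ∉ C →
      C₁ ∪ C₂ = insert y C → lam y ≠ 0 := by
    intro y C hCM hyC hins hly
    have hz : ∑ v ∈ C, lam v • v = 0 := by
      rw [hins, Finset.sum_insert hyC, hly, zero_smul, zero_add] at hlamsum
      exact hlamsum
    have hlz := findep C (hind C hCM) lam hz
    have hμz : ∀ v ∈ C₁ ∪ C₂, μ v = 0 := by
      intro v hv
      rw [hμlam v hv]
      rw [hins, Finset.mem_insert] at hv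
      rcases hv with h | h
      · rw [h, hly, zero_mul]
      · rw [hlz v h, zero_mul]
    have hμ₀ : μ₀ = 0 := by
      have : ∑ v ∈ C₁ ∪ C₂, μ v = 0 := Finset.sum_eq_zero hμz
      linarith [haff]
    rcases hnt with h | ⟨v, hv, hv'⟩
    · exact h hμ₀
    · exact hv' (hμz v hv)
  have hla : lam a ≠ 0 := key a C₂ hC₂ haC.2 hU2
  have hlb : lam b ≠ 0 := key b C₁ hC₁ hbC.2 hU1
  -- same sign
  have hface' := hface C₁ hC₁ C₂ hC₂
  have hsame : 0 < lam a * lam b := by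
    rcases hla.lt_or_gt with h1 | h1 <;> rcases hlb.lt_or_gt with h2 | h2
    · exact mul_pos_of_neg_of_neg h1 h2
    · exfalso
      apply aux_mixed C₁ C₂ a b (hind C₁ hC₁) hface' ha hb (fun v => -lam v)
      · have he : ∀ v ∈ C₁ ∪ C₂, (fun v => -lam v) v • v = -(lam v • v) :=
          fun v _ => neg_smul _ _
        rw [Finset.sum_congr rfl he, Finset.sum_neg_distrib, hlamsum, neg_zero]
      · exact neg_pos.mpr h1
      · exact neg_lt_zero.mpr h2
    · exact absurd (aux_mixed C₁ C₂ a b (hind C₁ hC₁) hface' ha hb lam hlamsum h1 h2) id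
    · exact mul_pos h1 h2
  -- w = a or w = b
  have hwab : w = a ∨ w = b := by
    rcases Finset.mem_union.mp hw with h | h
    · left; rw [ha] at h; exact Finset.mem_singleton.mp h
    · right; rw [hb] at h; exact Finset.mem_singleton.mp h
  have haU : a ∈ C₁ ∪ C₂ := Finset.mem_union_left _ haC.1
  have hbU : b ∈ C₁ ∪ C₂ := Finset.mem_union_right _ hbC.1
  have hωa := hωU a haU
  have hωb := hωU b hbU
  have hsum_eq : ∀ (s : ℝ), s = 1 ∨ s = -1 →
      ∑ v ∈ C₁ ∪ C₂, (s * lam v) * ω v = s * ∑ v ∈ C₁ ∪ C₂, μ v := by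
    intro s _
    rw [Finset.mul_sum]
    apply Finset.sum_congr rfl
    intro v hv
    rw [hμlam v hv]; ring
  rcases hla.lt_or_gt with hneg | hposa
  · -- lam a < 0, so lam b < 0; use -lam
    have hnegb : lam b < 0 := by nlinarith
    have hkey := hpos C₁ hC₁ C₂ hC₂ hne hcap (fun v => -lam v)
      (fun v hv => by simp [hlam, hμ0 v hv])
      (by have he : ∀ v ∈ C₁ ∪ C₂, (fun v => -lam v) v • v = -(lam v • v) :=
            fun v _ => neg_smul _ _
          rw [Finset.sum_congr rfl he, Finset.sum_neg_distrib, hlamsum, neg_zero])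
      (by intro v hv
          rcases Finset.mem_union.mp hv with h | h
          · rw [ha] at h; rw [Finset.mem_singleton.mp h]; exact neg_pos.mpr hneg
          · rw [hb] at h; rw [Finset.mem_singleton.mp h]; exact neg_pos.mpr hnegb)
    have := hsum_eq (-1) (Or.inr rfl)
    simp only [neg_one_mul] at this
    rw [this] at hkey
    have hμ₀pos : 0 < μ₀ := by linarith
    have hμw : μ w = lam w * ω w := by
      rcases hwab with rfl | rfl
      · exact hμlam w haU
      · exact hμlam w hbU
    have : μ w < 0 := by
      rcases hwab with rfl | rfl
      · rw [hμw]; exact mul_neg_of_neg_of_pos hneg hωa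
      · rw [hμw]; exact mul_neg_of_neg_of_pos hnegb hωb
    exact mul_neg_of_pos_of_neg hμ₀pos this
  · -- lam a > 0, so lam b > 0; use lam
    have hposb : 0 < lam b := by nlinarith
    have hkey := hpos C₁ hC₁ C₂ hC₂ hne hcap lam
      (fun v hv => by simp [hlam, hμ0 v hv])
      hlamsum
      (by intro v hv
          rcases Finset.mem_union.mp hv with h | h
          · rw [ha] at h; rw [Finset.mem_singleton.mp h]; exact hposa
          · rw [hb] at h; rw [Finset.mem_singleton.mp h]; exact hposb)
    have := hsum_eq 1 (Or.inl rfl)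
    simp only [one_mul] at this
    rw [this] at hkey
    have hμ₀neg : μ₀ < 0 := by linarith
    have hμw : μ w = lam w * ω w := by
      rcases hwab with rfl | rfl
      · exact hμlam w haU
      · exact hμlam w hbU
    have : 0 < μ w := by
      rcases hwab with rfl | rfl
      · rw [hμw]; exact mul_pos hposa hωa
      · rw [hμw]; exact mul_pos hposb hωb
    exact mul_neg_of_neg_of_pos hμ₀neg this
end

section
/- Let T be a triangulation of a convex (n+3)-gon with n ≥ 2, and let B_T be the set consisting of the n diagonals of T together with the n diagonals obtainable from T by a single flip. If T₁ and T₂ are triangulations with B_{T₁} = B_{T₂}, then T₁ = T₂. -/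
/-- A triangulation of the convex `m`-gon: a maximal set of pairwise non-crossing diagonals. -/
def PIsTriangulation (m : ℕ) (T : Finset (Finset (ZMod m))) : Prop :=
  (∀ d ∈ T, PIsDiag m d) ∧
  (∀ d ∈ T, ∀ e ∈ T, ¬ PCross m d e) ∧
  (∀ d, PIsDiag m d → (∀ e ∈ T, ¬ PCross m d e) → d ∈ T)

/-- `B_T`: the diagonals of `T` together with all diagonals obtainable from `T` by one flip. -/
def flipClosure (m : ℕ) (T : Finset (Finset (ZMod m))) : Set (Finset (ZMod m)) :=
  {d | d ∈ T} ∪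
  {d' | ∃ d ∈ T, d' ∉ T ∧ PIsDiag m d' ∧ PIsTriangulation m (insert d' (T.erase d))}

set_option maxHeartbeats 1000000

namespace StmtAux
section arith
variable {m : ℕ}

variable {m : ℕ}

def dval {m : ℕ} (a b : ZMod m) : ℕ := (b - a).val

def natArc (X Y Z : ℕ) : Prop :=
  (X ≤ Y ∧ X < Z ∧ Z < Y) ∨ (Y < X ∧ (X < Z ∨ Z < Y))

lemma dval_lt (hm : 5 ≤ m) (a b : ZMod m) : dval a b < m := by
  haveI : NeZero m := ⟨by omega⟩; exact ZMod.val_lt _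

lemma dval_self (a : ZMod m) : dval a a = 0 := by
  simp [dval]

lemma dval_eq_zero {a b : ZMod m} : dval a b = 0 ↔ a = b := by
  rw [dval, ZMod.val_eq_zero, sub_eq_zero, eq_comm]

lemma val_sub_val (hm : 5 ≤ m) (x y : ZMod m) :
    (x - y).val = if y.val ≤ x.val then x.val - y.val else x.val + m - y.val := by
  haveI : NeZero m := ⟨by omega⟩
  split_ifs with h
  · exact ZMod.val_sub h
  · push_neg at h
    have hy0 : y ≠ 0 := by
      intro h0; rw [h0] at h; simp [ZMod.val_zero] at h
    have hxy : (x - y) = x + (-y) := by ring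
    haveI : NeZero y := ⟨hy0⟩
    rw [hxy, ZMod.val_add, ZMod.val_neg_of_ne_zero]
    have h1 : x.val < m := ZMod.val_lt x
    have h2 : y.val < m := ZMod.val_lt y
    have : x.val + (m - y.val) < m := by omega
    rw [Nat.mod_eq_of_lt this]; omega

lemma dval_delta (hm : 5 ≤ m) (a u v : ZMod m) :
    dval u v = if dval a u ≤ dval a v then dval a v - dval a u else dval a v + m - dval a u := by
  have h : v - u = (v - a) - (u - a) := by ring
  rw [dval, h, val_sub_val hm]; rfl

lemma dval_inj (hm : 5 ≤ m) (a : ZMod m) {u v : ZMod m} : u = v ↔ dval a u = dval a v := by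
  haveI : NeZero m := ⟨by omega⟩
  constructor
  · rintro rfl; rfl
  · intro h
    have := ZMod.val_injective m h
    exact sub_left_injective.eq_iff.mp this

lemma btw_iff (hm : 5 ≤ m) (a u x v : ZMod m) :
    Pbetween m u x v ↔ natArc (dval a u) (dval a v) (dval a x) := by
  have h1 := dval_lt hm a u
  have h2 := dval_lt hm a v
  have h3 := dval_lt hm a x
  show 0 < dval u x ∧ dval u x < dval u v ↔ _
  rw [dval_delta hm a u x, dval_delta hm a u v, natArc]
  split_ifs <;> omega

end arith

section cross
variable {m : ℕ}

lemma pair_eq' {a b c d : ZMod m} (hab : a ≠ b) (h : ({a,b} : Finset (ZMod m)) = {c,d}) :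
    (c = a ∧ d = b) ∨ (c = b ∧ d = a) := by
  have hc : c ∈ ({a,b} : Finset (ZMod m)) := by rw [h]; simp
  have hd : d ∈ ({a,b} : Finset (ZMod m)) := by rw [h]; simp
  have ha : a ∈ ({c,d} : Finset (ZMod m)) := by rw [← h]; simp
  have hb : b ∈ ({c,d} : Finset (ZMod m)) := by rw [← h]; simp
  simp only [Finset.mem_insert, Finset.mem_singleton] at hc hd ha hb
  rcases hc with rfl | rfl <;> rcases hd with rfl | rfl <;> tauto

lemma key_ne (hm : 5 ≤ m) (o : ZMod m) {u v : ZMod m} (huv : u ≠ v) :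
    dval o u ≠ dval o v :=
  fun h => huv ((dval_inj hm o).mpr h)

/-- The workhorse: crossing of two explicit pairs, in coordinates relative to anchor `o`. -/
lemma cross_pair_iff (hm : 5 ≤ m) (o : ZMod m) {x1 x2 x3 x4 : ZMod m}
    (h12 : x1 ≠ x2) (h34 : x3 ≠ x4) :
    PCross m {x1,x2} {x3,x4} ↔
      (dval o x1 ≠ dval o x3 ∧ dval o x1 ≠ dval o x4 ∧ dval o x2 ≠ dval o x3 ∧
        dval o x2 ≠ dval o x4 ∧
        Xor' (natArc (dval o x1) (dval o x2) (dval o x3))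
             (natArc (dval o x1) (dval o x2) (dval o x4))) := by
  constructor
  · rintro ⟨a, b, c, d, hab, hcd, h1, h2, h3, h4, h5, h6, hxor⟩
    rw [btw_iff hm o, btw_iff hm o] at hxor
    have e1 := pair_eq' h1 hab.symm
    have e2 := pair_eq' h6 hcd.symm
    have b1 := dval_lt hm o a; have b2 := dval_lt hm o b
    have b3 := dval_lt hm o c; have b4 := dval_lt hm o d
    have K1 := key_ne hm o h1; have K2 := key_ne hm o h2
    have K3 := key_ne hm o h3; have K4 := key_ne hm o h4
    have K5 := key_ne hm o h5; have K6 := key_ne hm o h6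
    rcases e1 with ⟨rfl, rfl⟩ | ⟨rfl, rfl⟩ <;> rcases e2 with ⟨rfl, rfl⟩ | ⟨rfl, rfl⟩ <;>
      refine ⟨?_, ?_, ?_, ?_, ?_⟩ <;>
      first
        | assumption
        | (exact Ne.symm (by assumption))
        | (unfold Xor' Xor natArc at hxor ⊢; omega)
  · rintro ⟨n13, n14, n23, n24, hxor⟩
    refine ⟨x1, x2, x3, x4, rfl, rfl, h12, ?_, ?_, ?_, ?_, h34,
      by rw [btw_iff hm o, btw_iff hm o]; exact hxor⟩ <;>
      intro h <;> rw [dval_inj hm o] at h <;> tauto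

lemma cross_elim' {s t : Finset (ZMod m)} (h : PCross m s t) :
    ∃ p q r w : ZMod m, p ≠ q ∧ r ≠ w ∧ s = {p,q} ∧ t = {r,w} ∧
      p ≠ r ∧ p ≠ w ∧ q ≠ r ∧ q ≠ w := by
  obtain ⟨a, b, c, d, hab, hcd, h1, h2, h3, h4, h5, h6, _⟩ := h
  exact ⟨a, b, c, d, h1, h6, hab, hcd, h2, h3, h4, h5⟩

lemma cross_not_share' {s t : Finset (ZMod m)} {x : ZMod m}
    (hs : x ∈ s) (ht : x ∈ t) : ¬ PCross m s t := by
  intro h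
  obtain ⟨p, q, r, w, hpq, hrw, rfl, rfl, h1, h2, h3, h4⟩ := cross_elim' h
  simp only [Finset.mem_insert, Finset.mem_singleton] at hs ht
  rcases hs with rfl | rfl <;> rcases ht with rfl | rfl <;> simp_all

lemma cross_self' (t : Finset (ZMod m)) : ¬ PCross m t t := by
  intro h
  obtain ⟨p, q, r, w, hpq, hrw, hs, hts, h1, h2, h3, h4⟩ := cross_elim' h
  have : p ∈ ({r,w} : Finset (ZMod m)) := by rw [← hts, hs]; simp
  simp only [Finset.mem_insert, Finset.mem_singleton] at this
  tauto

lemma cross_symm' (hm : 5 ≤ m) {s t : Finset (ZMod m)} (h : PCross m s t) : PCross m t s := by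
  obtain ⟨a, b, c, d, hab, hcd, h1, h2, h3, h4, h5, h6, hxor⟩ := h
  subst hab hcd
  rw [btw_iff hm a, btw_iff hm a] at hxor
  rw [cross_pair_iff hm a h6 h1]
  have K1 := key_ne hm a h1; have K2 := key_ne hm a h2
  have K3 := key_ne hm a h3; have K4 := key_ne hm a h4
  have K5 := key_ne hm a h5; have K6 := key_ne hm a h6
  have b1 := dval_lt hm a a; have b2 := dval_lt hm a b
  have b3 := dval_lt hm a c; have b4 := dval_lt hm a d
  have h0 := dval_self a
  refine ⟨K2.symm, K4.symm, K3.symm, K5.symm, ?_⟩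
  unfold Xor' Xor natArc at hxor ⊢; omega

end cross

section decomp
variable {m : ℕ}

lemma dval_rev (hm : 5 ≤ m) {a b : ZMod m} (h : a ≠ b) : dval a b + dval b a = m := by
  haveI : NeZero m := ⟨by omega⟩
  have hne : (b - a) ≠ 0 := sub_ne_zero.mpr (Ne.symm h)
  haveI : NeZero (b - a) := ⟨hne⟩
  have h1 : dval b a = m - dval a b := by
    rw [dval, dval, show a - b = -(b - a) by ring, ZMod.val_neg_of_ne_zero]
  have h2 := dval_lt hm a b
  have h3 : dval a b ≠ 0 := fun h0 => h (dval_eq_zero.mp h0)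
  omega

lemma dval_le_case (hm : 5 ≤ m) (a : ZMod m) {u v : ZMod m}
    (h : dval a u ≤ dval a v) : dval u v = dval a v - dval a u := by
  rw [dval_delta hm a u v]; exact if_pos h

lemma dval_gt_case (hm : 5 ≤ m) (a : ZMod m) {u v : ZMod m}
    (h : dval a v < dval a u) : dval u v = dval a v + m - dval a u := by
  rw [dval_delta hm a u v]; exact if_neg (by omega)

lemma sub_ne_one_iff (hm : 5 ≤ m) (a b : ZMod m) : a - b ≠ (1 : ZMod m) ↔ dval b a ≠ 1 := by
  haveI : NeZero m := ⟨by omega⟩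
  haveI : Fact (1 < m) := ⟨by omega⟩
  constructor
  · intro h h1
    exact h (by rw [show (a - b) = ((a-b).val : ZMod m) by simp [ZMod.natCast_val, ZMod.cast_id],
      show (a-b).val = 1 from h1]; simp)
  · intro h h1
    exact h (by rw [dval, h1, ZMod.val_one])

lemma diag_pair_iff (hm : 5 ≤ m) {x y : ZMod m} (hxy : x ≠ y) :
    PIsDiag m {x,y} ↔ (dval x y ≠ 1 ∧ dval y x ≠ 1) := by
  constructor
  · rintro ⟨a, b, hab, h1, h2, h3⟩
    rw [sub_ne_one_iff hm] at h2 h3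
    rcases pair_eq' h1 hab.symm with ⟨rfl, rfl⟩ | ⟨rfl, rfl⟩ <;> exact ⟨by tauto, by tauto⟩
  · rintro ⟨h1, h2⟩
    exact ⟨x, y, rfl, hxy, (sub_ne_one_iff hm x y).mpr h2, (sub_ne_one_iff hm y x).mpr h1⟩

lemma cross_isDiag (hm : 5 ≤ m) {t s : Finset (ZMod m)} (h : PCross m t s) : PIsDiag m t := by
  obtain ⟨a, b, c, d, hab, hcd, h1, h2, h3, h4, h5, h6, hxor⟩ := h
  rw [btw_iff hm a, btw_iff hm a] at hxor
  have b2 := dval_lt hm a b; have b3 := dval_lt hm a c; have b4 := dval_lt hm a d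
  have K1 := key_ne hm a h1; have K2 := key_ne hm a h2; have K3 := key_ne hm a h3
  have K4 := key_ne hm a h4; have K5 := key_ne hm a h5; have K6 := key_ne hm a h6
  have h0 := dval_self a
  have hrev := dval_rev hm h1
  rw [hab, diag_pair_iff hm h1]
  constructor <;> intro hone <;> unfold Xor' Xor natArc at hxor <;> omega

/-- decompose a crossing `t × {x,y}` into an endpoint of `t` inside arc `(x,y)` and one outside,
in coordinates relative to anchor `o`. -/
lemma cross_rep (hm : 5 ≤ m) (o : ZMod m) {t : Finset (ZMod m)} {x y : ZMod m}
    (hxy : x ≠ y) (h : PCross m t {x,y}) :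
    ∃ u v, t = {u,v} ∧ u ≠ v ∧ u ≠ x ∧ u ≠ y ∧ v ≠ x ∧ v ≠ y ∧
      natArc (dval o x) (dval o y) (dval o u) ∧
      ¬ natArc (dval o x) (dval o y) (dval o v) := by
  obtain ⟨a, b, c, d, hab, hcd, h1, h2, h3, h4, h5, h6, _⟩ := cross_symm' hm h
  have h' : PCross m {a,b} {c,d} := by rw [← hab, ← hcd]; exact cross_symm' hm h
  rw [cross_pair_iff hm o h1 h6] at h'
  obtain ⟨n1, n2, n3, n4, hxor⟩ := h'
  have b1 := dval_lt hm o a; have b2 := dval_lt hm o b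
  have b3 := dval_lt hm o c; have b4 := dval_lt hm o d
  rcases pair_eq' hxy hab with ⟨rfl, rfl⟩ | ⟨rfl, rfl⟩
  · rcases hxor with ⟨hc, hd⟩ | ⟨hd, hc⟩
    · exact ⟨c, d, hcd, h6, Ne.symm h2, Ne.symm h4, Ne.symm h3, Ne.symm h5, hc, hd⟩
    · exact ⟨d, c, by rw [hcd, Finset.pair_comm], Ne.symm h6, Ne.symm h3, Ne.symm h5,
        Ne.symm h2, Ne.symm h4, hd, hc⟩
  · rcases hxor with ⟨hc, hd⟩ | ⟨hd, hc⟩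
    · refine ⟨d, c, by rw [hcd, Finset.pair_comm], Ne.symm h6, Ne.symm h5, Ne.symm h3,
        Ne.symm h4, Ne.symm h2, ?_, ?_⟩ <;> unfold natArc at hc hd ⊢ <;> omega
    · refine ⟨c, d, hcd, h6, Ne.symm h4, Ne.symm h2, Ne.symm h5, Ne.symm h3, ?_, ?_⟩ <;>
        unfold natArc at hc hd ⊢ <;> omega

/-- decompose a crossing `s × t` into a cyclically ordered quadruple `a b c y` with
`s = {a,c}`, `t = {b,y}`. -/
lemma cross_cycord (hm : 5 ≤ m) {s t : Finset (ZMod m)} (h : PCross m s t) :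
    ∃ a b c y : ZMod m, s = {a,c} ∧ t = {b,y} ∧
      0 < dval a b ∧ dval a b < dval a c ∧ dval a c < dval a y ∧ dval a y < m := by
  obtain ⟨a, c, p, q, hs, ht, h1, h2, h3, h4, h5, h6, hxor⟩ := h
  rw [btw_iff hm a, btw_iff hm a] at hxor
  have b2 := dval_lt hm a c; have b3 := dval_lt hm a p; have b4 := dval_lt hm a q
  have K1 := key_ne hm a h1; have K2 := key_ne hm a h2; have K3 := key_ne hm a h3
  have K4 := key_ne hm a h4; have K5 := key_ne hm a h5; have K6 := key_ne hm a h6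
  have h0 := dval_self a
  rcases hxor with ⟨hp, hq⟩ | ⟨hq, hp⟩
  · exact ⟨a, p, c, q, hs, ht, by unfold natArc at hp hq; omega, by unfold natArc at hp hq; omega,
      by unfold natArc at hp hq; omega, b4⟩
  · exact ⟨a, q, c, p, hs, by rw [ht, Finset.pair_comm], by unfold natArc at hp hq; omega,
      by unfold natArc at hp hq; omega, by unfold natArc at hp hq; omega, b3⟩

end decomp

section geom
variable {m : ℕ}

lemma ne_of_dval_ne (o : ZMod m) {u v : ZMod m} (h : dval o u ≠ dval o v) : u ≠ v :=
  fun he => h (by rw [he])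

/-- Core geometric fact: if `t` crosses neither diagonal `{a,c}` nor `{b,y}` of the
quadrilateral `a b c y`, it does not cross the side `{a,b}`. -/
lemma geom_main (hm : 5 ≤ m) {a b c y p q : ZMod m}
    (hb : 0 < dval a b) (hbc : dval a b < dval a c) (hcy : dval a c < dval a y)
    (hpq : p ≠ q)
    (h1 : ¬ PCross m {p,q} {a,c}) (h2 : ¬ PCross m {p,q} {b,y}) :
    ¬ PCross m {p,q} {a,b} := by
  intro hcr
  have h0 := dval_self a
  have bb := dval_lt hm a b; have bc := dval_lt hm a c; have by' := dval_lt hm a y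
  have bp := dval_lt hm a p; have bq := dval_lt hm a q
  have hac : a ≠ c := ne_of_dval_ne a (by omega)
  have hby : b ≠ y := ne_of_dval_ne a (by omega)
  have hab : a ≠ b := ne_of_dval_ne a (by omega)
  rw [cross_pair_iff hm a hpq hac] at h1
  rw [cross_pair_iff hm a hpq hby] at h2
  rw [cross_pair_iff hm a hpq hab] at hcr
  unfold Xor' Xor natArc at h1 h2 hcr
  omega

/-- If `w = {p,q}` crosses `{u,a}` or `{u,b}` but crosses neither `s = {a,b}` nor
`t = {u,v}` (where `t` crosses `s`), contradiction. -/
lemma geom_nbr (hm : 5 ≤ m) {a b u v p q : ZMod m}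
    (h1 : 0 < dval a u) (h2 : dval a u < dval a b) (h3 : dval a b < dval a v)
    (hpq : p ≠ q)
    (h : PCross m {p,q} {u,a} ∨ PCross m {p,q} {u,b})
    (hs : ¬ PCross m {p,q} {a,b}) (ht : ¬ PCross m {p,q} {u,v}) : False := by
  have h0 := dval_self a
  have bb := dval_lt hm a b; have bu := dval_lt hm a u; have bv := dval_lt hm a v
  have bp := dval_lt hm a p; have bq := dval_lt hm a q
  have hab : a ≠ b := ne_of_dval_ne a (by omega)
  have hua : u ≠ a := ne_of_dval_ne a (by omega)
  have hub : u ≠ b := ne_of_dval_ne a (by omega)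
  have huv : u ≠ v := ne_of_dval_ne a (by omega)
  rw [cross_pair_iff hm a hpq hua] at h
  rw [cross_pair_iff hm a hpq hub] at h
  rw [cross_pair_iff hm a hpq hab] at hs
  rw [cross_pair_iff hm a hpq huv] at ht
  unfold Xor' Xor natArc at h hs ht
  omega

/-- Descent step: if `w = {p,q}` crosses `t = {u,v}` (which crosses `s = {a,b}`) but not `s`,
and `w ≠ s`, there is a diagonal `t'` crossing `s`, sharing an endpoint with `w`, all of whose
crossings cross `t` or `w`. -/
lemma geom_desc (hm : 5 ≤ m) {a b u v p q : ZMod m}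
    (hU : 0 < dval a u) (hUB : dval a u < dval a b) (hBV : dval a b < dval a v)
    (hpq : p ≠ q)
    (hP : natArc (dval a u) (dval a v) (dval a p))
    (hcr : PCross m {p,q} {u,v})
    (hns : ¬ PCross m {p,q} {a,b})
    (hne1 : ¬ (p = b ∧ q = a)) (hne2 : ¬ (p = a ∧ q = b)) :
    ∃ u' v' : ZMod m, u' ≠ v' ∧ PCross m {u',v'} {a,b} ∧
      (u' ∈ ({p,q} : Finset (ZMod m)) ∨ v' ∈ ({p,q} : Finset (ZMod m))) ∧
      ∀ r s' : ZMod m, r ≠ s' → PCross m {r,s'} {u',v'} →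
        PCross m {r,s'} {u,v} ∨ PCross m {r,s'} {p,q} := by
  have h0 := dval_self a
  have bb := dval_lt hm a b; have bu := dval_lt hm a u; have bv := dval_lt hm a v
  have bp := dval_lt hm a p; have bq := dval_lt hm a q
  have hab : a ≠ b := ne_of_dval_ne a (by omega)
  have huv : u ≠ v := ne_of_dval_ne a (by omega)
  rw [cross_pair_iff hm a hpq huv] at hcr
  rw [cross_pair_iff hm a hpq hab] at hns
  obtain ⟨npu, npv, nqu, nqv, hxor⟩ := hcr
  have npv' : p ≠ v := ne_of_dval_ne a npv
  have nqv' : q ≠ v := ne_of_dval_ne a nqv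
  have nqu' : u ≠ q := Ne.symm (ne_of_dval_ne a nqu)
  have npu' : u ≠ p := Ne.symm (ne_of_dval_ne a npu)
  have hQ : ¬ natArc (dval a u) (dval a v) (dval a q) := by
    unfold natArc at hP ⊢; unfold Xor' Xor natArc at hxor; omega
  have hPr : dval a u < dval a p ∧ dval a p < dval a v := by
    unfold natArc at hP; omega
  have hQr : dval a q < dval a u ∨ dval a v < dval a q := by
    unfold natArc at hQ; omega
  have hne1' : ¬ (dval a p = dval a b ∧ dval a q = 0) := by
    rintro ⟨e1, e2⟩
    exact hne1 ⟨(dval_inj hm a).mpr e1, (dval_inj hm a).mpr (by rw [e2, dval_self])⟩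
  -- case analysis
  rcases lt_trichotomy (dval a p) (dval a b) with hPB | hPB | hPB
  · -- p ∈ (u,b)
    rcases hQr with hQr | hQr
    · -- q ∈ [a,u) : t' = {p, v}
      refine ⟨p, v, npv', ?_, by simp, ?_⟩
      · rw [cross_pair_iff hm a npv' hab]
        unfold Xor' Xor natArc at hns ⊢; omega
      · intro r s' hrs hcross
        rw [cross_pair_iff hm a hrs npv'] at hcross
        rw [cross_pair_iff hm a hrs huv, cross_pair_iff hm a hrs hpq]
        have br := dval_lt hm a r; have bs := dval_lt hm a s'
        unfold Xor' Xor natArc at hcross ⊢; omega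
    · exfalso; unfold Xor' Xor natArc at hns; omega
  · -- p = b
    rcases hQr with hQr | hQr
    · -- q ∈ (a,u) (q = a excluded by hne1') : t' = {q, v}
      refine ⟨q, v, nqv', ?_, by simp, ?_⟩
      · rw [cross_pair_iff hm a nqv' hab]
        unfold Xor' Xor natArc; omega
      · intro r s' hrs hcross
        rw [cross_pair_iff hm a hrs nqv'] at hcross
        rw [cross_pair_iff hm a hrs huv, cross_pair_iff hm a hrs hpq]
        have br := dval_lt hm a r; have bs := dval_lt hm a s'
        unfold Xor' Xor natArc at hcross ⊢; omega
    · -- q ∈ (v,a] : t' = {u, q}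
      refine ⟨u, q, nqu', ?_, by simp, ?_⟩
      · rw [cross_pair_iff hm a nqu' hab]
        unfold Xor' Xor natArc; omega
      · intro r s' hrs hcross
        rw [cross_pair_iff hm a hrs nqu'] at hcross
        rw [cross_pair_iff hm a hrs huv, cross_pair_iff hm a hrs hpq]
        have br := dval_lt hm a r; have bs := dval_lt hm a s'
        unfold Xor' Xor natArc at hcross ⊢; omega
  · -- p ∈ (b,v)
    have hQ0 : dval a q = 0 ∨ dval a v < dval a q := by
      rcases hQr with hQr | hQr
      · rcases Nat.eq_zero_or_pos (dval a q) with h' | h'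
        · exact Or.inl h'
        · exfalso; unfold Xor' Xor natArc at hns; omega
      · exact Or.inr hQr
    refine ⟨u, p, npu', ?_, by simp, ?_⟩
    · rw [cross_pair_iff hm a npu' hab]
      unfold Xor' Xor natArc; omega
    · intro r s' hrs hcross
      rw [cross_pair_iff hm a hrs npu'] at hcross
      rw [cross_pair_iff hm a hrs huv, cross_pair_iff hm a hrs hpq]
      have br := dval_lt hm a r; have bs := dval_lt hm a s'
      unfold Xor' Xor natArc at hcross ⊢; omega

end geom

section comb
variable {m : ℕ}

lemma tri_subset_eq {T₁ T₂ : Finset (Finset (ZMod m))}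
    (h1 : PIsTriangulation m T₁) (h2 : PIsTriangulation m T₂) (h : T₁ ⊆ T₂) : T₁ = T₂ := by
  apply Finset.Subset.antisymm h
  intro x hx
  exact h1.2.2 x (h2.1 x hx) (fun e he => h2.2.1 x hx e (h he))

lemma mem_flip_left {T : Finset (Finset (ZMod m))} {x : Finset (ZMod m)} (h : x ∈ T) :
    x ∈ flipClosure m T := by
  simp only [flipClosure, Set.mem_union, Set.mem_setOf_eq]
  exact Or.inl h

lemma flip_mem_analysis (hm : 5 ≤ m) {T : Finset (Finset (ZMod m))} {x : Finset (ZMod m)}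
    (hT : PIsTriangulation m T) (hx : x ∈ flipClosure m T) (hxT : x ∉ T) :
    ∃ r ∈ T, PCross m x r ∧ (∀ w ∈ T.erase r, ¬ PCross m x w) ∧
      PIsTriangulation m (insert x (T.erase r)) := by
  simp only [flipClosure, Set.mem_union, Set.mem_setOf_eq] at hx
  rcases hx with hx | ⟨r, hr, _, hdiag, htri⟩
  · exact absurd hx hxT
  · have hnc : ∀ w ∈ T.erase r, ¬ PCross m x w := fun w hw =>
      htri.2.1 x (Finset.mem_insert_self _ _) w (Finset.mem_insert_of_mem hw)
    have hcross : PCross m x r := by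
      by_contra hc
      refine hxT (hT.2.2 x hdiag (fun e he => ?_))
      rcases eq_or_ne e r with rfl | hne
      · exact hc
      · exact hnc e (Finset.mem_erase.mpr ⟨hne, he⟩)
    exact ⟨r, hr, hcross, hnc, htri⟩

lemma exists_tri_ext (hm : 5 ≤ m) (S₀ : Finset (Finset (ZMod m)))
    (hd : ∀ d ∈ S₀, PIsDiag m d) (hnc : ∀ d ∈ S₀, ∀ e ∈ S₀, ¬ PCross m d e) :
    ∃ M, S₀ ⊆ M ∧ PIsTriangulation m M := by
  classical
  haveI : NeZero m := ⟨by omega⟩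
  let P : Finset (Finset (ZMod m)) → Prop := fun A =>
    S₀ ⊆ A ∧ (∀ d ∈ A, PIsDiag m d) ∧ (∀ d ∈ A, ∀ e ∈ A, ¬ PCross m d e)
  obtain ⟨M, hM, hmax⟩ := Finset.exists_max_image (Finset.univ.filter P) Finset.card
    ⟨S₀, by
      simp only [Finset.mem_filter, Finset.mem_univ, true_and]
      exact ⟨Finset.Subset.refl _, hd, hnc⟩⟩
  simp only [Finset.mem_filter, Finset.mem_univ, true_and] at hM
  refine ⟨M, hM.1, hM.2.1, hM.2.2, ?_⟩
  intro d hdiag hnc'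
  by_contra hdM
  have hP : P (insert d M) := by
    refine ⟨hM.1.trans (Finset.subset_insert _ _), ?_, ?_⟩
    · intro x hxm
      rcases Finset.mem_insert.mp hxm with rfl | hxm
      · exact hdiag
      · exact hM.2.1 x hxm
    · intro z hz w hw
      rcases Finset.mem_insert.mp hz with hz' | hz'
      · rcases Finset.mem_insert.mp hw with hw' | hw'
        · rw [hz', hw']; exact cross_self' _
        · rw [hz']; exact hnc' _ hw'
      · rcases Finset.mem_insert.mp hw with hw' | hw'
        · rw [hw']; exact fun hc => hnc' _ hz' (cross_symm' hm hc)
        · exact hM.2.2 _ hz' _ hw'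
  have hle := hmax (insert d M) (by
    simp only [Finset.mem_filter, Finset.mem_univ, true_and]
    exact hP)
  rw [Finset.card_insert_of_notMem hdM] at hle
  omega

/-- Existence of a diagonal crossing `s = {a,b}` and nothing else of `T`. -/
lemma exists_flip_candidate (hm : 5 ≤ m) {T : Finset (Finset (ZMod m))}
    (hT : PIsTriangulation m T) {a b : ZMod m}
    (hB2 : 2 ≤ dval a b) (hBm : dval a b + 2 ≤ m) (hs : ({a,b} : Finset (ZMod m)) ∈ T) :
    ∃ t₀, PCross m t₀ {a,b} ∧ ∀ w ∈ T.erase {a,b}, ¬ PCross m t₀ w := by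
  classical
  haveI : NeZero m := ⟨by omega⟩
  haveI : Fact (1 < m) := ⟨by omega⟩
  have h0 := dval_self a
  have hab : a ≠ b := ne_of_dval_ne a (by omega)
  -- the diagonal {a+1, b+1} crosses {a,b}
  have hd1 : dval a (a+1) = 1 := by
    rw [dval, show a + 1 - a = (1 : ZMod m) by ring, ZMod.val_one]
  have hd2 : dval a (b+1) = dval a b + 1 := by
    rw [dval, show b + 1 - a = (b - a) + 1 by ring, ZMod.val_add, ZMod.val_one]
    exact Nat.mod_eq_of_lt (by have := dval_lt hm a b; unfold dval at *; omega)
  have hne1 : a + 1 ≠ b + 1 := fun h => hab (by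
    have := add_right_cancel h; exact this)
  have hcand : PCross m {a+1, b+1} {a,b} := by
    rw [cross_pair_iff hm a hne1 hab]
    have := dval_lt hm a b
    unfold Xor' Xor natArc; omega
  obtain ⟨t₀, ht₀, hmin⟩ := Finset.exists_min_image
    (Finset.univ.filter (fun t => PCross m t {a,b}))
    (fun t => (T.filter (fun w => PCross m t w)).card)
    ⟨{a+1,b+1}, by simp only [Finset.mem_filter, Finset.mem_univ, true_and]; exact hcand⟩
  simp only [Finset.mem_filter, Finset.mem_univ, true_and] at ht₀
  refine ⟨t₀, ht₀, ?_⟩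
  intro w hw hcw
  have hwT : w ∈ T := Finset.mem_of_mem_erase hw
  have hws : w ≠ ({a,b} : Finset (ZMod m)) := (Finset.mem_erase.mp hw).1
  -- decompose t₀
  obtain ⟨u, v, ht₀uv, huv, hua, hub, hva, hvb, hAU, hAV⟩ := cross_rep hm a hab ht₀
  have bu := dval_lt hm a u; have bv := dval_lt hm a v; have bb := dval_lt hm a b
  have hU : 0 < dval a u ∧ dval a u < dval a b := by unfold natArc at hAU; omega
  have hV : dval a b < dval a v := by
    have h1 : dval a v ≠ 0 := fun h => hva (by rw [dval_inj hm a, h, dval_self])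
    have h2 : dval a v ≠ dval a b := key_ne hm a hvb
    unfold natArc at hAV; omega
  -- decompose w with an endpoint inside (u,v)
  subst ht₀uv
  obtain ⟨p, q, hwpq, hpq, hpu, hpv, hqu, hqv, hPU, hPV⟩ :=
    cross_rep hm a huv (cross_symm' hm hcw)
  have hnspq : ¬ PCross m {p,q} {a,b} := by
    rw [← hwpq]; exact hT.2.1 w hwT _ hs
  have hcrpq : PCross m {p,q} {u,v} := by rw [← hwpq]; exact cross_symm' hm hcw
  have hne1' : ¬ (p = b ∧ q = a) := by
    rintro ⟨rfl, rfl⟩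
    exact hws (by rw [hwpq, Finset.pair_comm])
  have hne2' : ¬ (p = a ∧ q = b) := by
    rintro ⟨rfl, rfl⟩
    exact hws hwpq
  obtain ⟨u', v', hu'v', hcr', hshare, hthird⟩ :=
    geom_desc hm hU.1 hU.2 hV hpq hPU hcrpq hnspq hne1' hne2'
  have hncw : ¬ PCross m {u',v'} w := by
    rcases hshare with hsh | hsh
    · exact fun hc => cross_not_share' (Finset.mem_insert_self u' {v'})
        (by rw [hwpq]; exact hsh) hc
    · exact fun hc => cross_not_share' (show v' ∈ ({u',v'} : Finset (ZMod m)) by simp)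
        (by rw [hwpq]; exact hsh) hc
  have hsub : T.filter (fun w' => PCross m {u',v'} w') ⊂
      T.filter (fun w' => PCross m {u,v} w') := by
    constructor
    · intro w' hw'
      rw [Finset.mem_filter] at hw' ⊢
      refine ⟨hw'.1, ?_⟩
      obtain ⟨r, s', r2, w2, hrs, hr2w2, hw'rs, _, _, _, _, _⟩ :=
        cross_elim' (cross_symm' hm hw'.2)
      have hcr2 : PCross m {r,s'} {u',v'} := by
        rw [← hw'rs]; exact cross_symm' hm hw'.2
      rcases hthird r s' hrs hcr2 with hc | hc
      · rw [hw'rs]; exact cross_symm' hm hc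
      · exfalso
        rcases eq_or_ne w' w with rfl | hww
        · exact hncw hw'.2
        · refine hT.2.1 w' hw'.1 w hwT ?_
          rw [hw'rs, hwpq]; exact hc
    · intro hsup
      have hwmem : w ∈ T.filter (fun w' => PCross m {u,v} w') :=
        Finset.mem_filter.mpr ⟨hwT, hcw⟩
      exact hncw (Finset.mem_filter.mp (hsup hwmem)).2
  have hlt := Finset.card_lt_card hsub
  have hge := hmin {u',v'} (by
    simp only [Finset.mem_filter, Finset.mem_univ, true_and]
    exact hcr')
  omega


end comb

section main
variable {m : ℕ}

lemma nbr_mem (hm : 5 ≤ m) {T : Finset (Finset (ZMod m))} (hT : PIsTriangulation m T)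
    {a b u v : ZMod m}
    (hU : 0 < dval a u) (hUB : dval a u < dval a b) (hBV : dval a b < dval a v)
    (hs : ({a,b} : Finset (ZMod m)) ∈ T)
    (hnc : ∀ w ∈ T.erase {a,b}, ¬ PCross m {u,v} w) :
    (2 ≤ dval a u → ({a,u} : Finset (ZMod m)) ∈ T) ∧
    (dval a u + 2 ≤ dval a b → ({u,b} : Finset (ZMod m)) ∈ T) := by
  have h0 := dval_self a
  have bu := dval_lt hm a u; have bb := dval_lt hm a b; have bv := dval_lt hm a v
  have hab : a ≠ b := ne_of_dval_ne a (by omega)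
  have hau : a ≠ u := ne_of_dval_ne a (by omega)
  have hub : u ≠ b := ne_of_dval_ne a (by omega)
  have hrevu := dval_rev hm hau
  have hrevb := dval_rev hm hab
  constructor
  · intro h2U
    refine hT.2.2 {a,u} ?_ ?_
    · rw [diag_pair_iff hm hau]
      constructor <;> omega
    · intro t ht
      intro hc
      rcases eq_or_ne t ({a,b} : Finset (ZMod m)) with rfl | hts
      · exact cross_not_share' (show a ∈ ({a,u}:Finset (ZMod m)) by simp)
          (show a ∈ ({a,b}:Finset (ZMod m)) by simp) hc
      · obtain ⟨p, q, r2, w2, hpq, _, htpq, _, _, _, _, _⟩ := cross_elim' (cross_symm' hm hc)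
        refine geom_nbr hm hU hUB hBV hpq (Or.inl ?_) ?_ ?_
        · rw [← htpq, Finset.pair_comm u a]; exact cross_symm' hm hc
        · rw [← htpq]; exact hT.2.1 t ht _ hs
        · rw [← htpq]
          exact fun hcc => hnc t (Finset.mem_erase.mpr ⟨hts, ht⟩) (cross_symm' hm hcc)
  · intro h2B
    refine hT.2.2 {u,b} ?_ ?_
    · rw [diag_pair_iff hm hub]
      have e1 : dval u b = dval a b - dval a u := dval_le_case hm a (by omega)
      have e2 : dval b u = dval a u + m - dval a b := dval_gt_case hm a (by omega)
      constructor <;> omega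
    · intro t ht
      intro hc
      rcases eq_or_ne t ({a,b} : Finset (ZMod m)) with rfl | hts
      · exact cross_not_share' (show b ∈ ({u,b}:Finset (ZMod m)) by simp)
          (show b ∈ ({a,b}:Finset (ZMod m)) by simp) hc
      · obtain ⟨p, q, r2, w2, hpq, _, htpq, _, _, _, _, _⟩ := cross_elim' (cross_symm' hm hc)
        refine geom_nbr hm hU hUB hBV hpq (Or.inr ?_) ?_ ?_
        · rw [← htpq]; exact cross_symm' hm hc
        · rw [← htpq]; exact hT.2.1 t ht _ hs
        · rw [← htpq]
          exact fun hcc => hnc t (Finset.mem_erase.mpr ⟨hts, ht⟩) (cross_symm' hm hcc)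

lemma uniq_first (hm : 5 ≤ m) {T : Finset (Finset (ZMod m))} (hT : PIsTriangulation m T)
    {a b u v u' v' : ZMod m}
    (hU : 0 < dval a u) (hUB : dval a u < dval a b) (hBV : dval a b < dval a v)
    (hs : ({a,b} : Finset (ZMod m)) ∈ T)
    (hnc : ∀ w ∈ T.erase {a,b}, ¬ PCross m {u,v} w)
    (hU' : 0 < dval a u') (hU'B : dval a u' < dval a b) (hBV' : dval a b < dval a v')
    (hu'v' : u' ≠ v')
    (hnc' : ∀ w ∈ T.erase {a,b}, ¬ PCross m {u',v'} w) :
    u' = u := by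
  have h0 := dval_self a
  have bu := dval_lt hm a u; have bb := dval_lt hm a b; have bv := dval_lt hm a v
  have bu' := dval_lt hm a u'; have bv' := dval_lt hm a v'
  have hau : a ≠ u := ne_of_dval_ne a (by omega)
  have hab : a ≠ b := ne_of_dval_ne a (by omega)
  have hub : u ≠ b := ne_of_dval_ne a (by omega)
  rcases lt_trichotomy (dval a u') (dval a u) with hlt | heq | hgt
  · exfalso
    have hmem : ({a,u} : Finset (ZMod m)) ∈ T :=
      (nbr_mem hm hT hU hUB hBV hs hnc).1 (by omega)
    have hne : ({a,u} : Finset (ZMod m)) ≠ {a,b} := by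
      intro h
      rcases pair_eq' hau h with ⟨_, h2⟩ | ⟨h1, _⟩
      · exact hub h2.symm
      · exact hau h1
    apply hnc' {a,u} (Finset.mem_erase.mpr ⟨hne, hmem⟩)
    rw [cross_pair_iff hm a hu'v' hau]
    unfold Xor' Xor natArc; omega
  · exact (dval_inj hm a).mpr heq
  · exfalso
    have hmem : ({u,b} : Finset (ZMod m)) ∈ T :=
      (nbr_mem hm hT hU hUB hBV hs hnc).2 (by omega)
    have hne : ({u,b} : Finset (ZMod m)) ≠ {a,b} := by
      intro h
      rcases pair_eq' hub h with ⟨h1, _⟩ | ⟨h1, _⟩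
      · exact hau h1
      · exact hab h1
    apply hnc' {u,b} (Finset.mem_erase.mpr ⟨hne, hmem⟩)
    rw [cross_pair_iff hm a hu'v' hub]
    unfold Xor' Xor natArc; omega

lemma uniq (hm : 5 ≤ m) {T : Finset (Finset (ZMod m))} (hT : PIsTriangulation m T)
    {a b u v : ZMod m}
    (hU : 0 < dval a u) (hUB : dval a u < dval a b) (hBV : dval a b < dval a v)
    (hs : ({a,b} : Finset (ZMod m)) ∈ T)
    (hnc : ∀ w ∈ T.erase {a,b}, ¬ PCross m {u,v} w)
    {t' : Finset (ZMod m)}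
    (hcr' : PCross m t' {a,b})
    (hnc' : ∀ w ∈ T.erase {a,b}, ¬ PCross m t' w) :
    t' = {u,v} := by
  have h0 := dval_self a
  have bu := dval_lt hm a u; have bb := dval_lt hm a b; have bv := dval_lt hm a v
  have hab : a ≠ b := ne_of_dval_ne a (by omega)
  obtain ⟨u', v', ht', hu'v', hu'a, hu'b, hv'a, hv'b, hA', hV'0⟩ := cross_rep hm a hab hcr'
  have bu' := dval_lt hm a u'; have bv' := dval_lt hm a v'
  have hU' : 0 < dval a u' ∧ dval a u' < dval a b := by unfold natArc at hA'; omega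
  have hV' : dval a b < dval a v' := by
    have hx1 : dval a v' ≠ 0 := fun h => hv'a ((dval_inj hm a).mpr (by rw [h, dval_self]))
    have hx2 := key_ne hm a hv'b
    unfold natArc at hV'0; omega
  subst ht'
  have hu'u : u' = u := uniq_first hm hT hU hUB hBV hs hnc hU'.1 hU'.2 hV' hu'v' hnc'
  have e1 : dval b v = dval a v - dval a b := dval_le_case hm a (le_of_lt hBV)
  have e2 : dval b a = m - dval a b := by have := dval_rev hm hab; omega
  have e3 : dval b u = dval a u + m - dval a b := dval_gt_case hm a hUB
  have e4 : dval b v' = dval a v' - dval a b := dval_le_case hm a (le_of_lt hV')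
  have e5 : dval b u' = dval a u' + m - dval a b := dval_gt_case hm a hU'.2
  have hsb : ({b,a} : Finset (ZMod m)) ∈ T := by rw [Finset.pair_comm b a]; exact hs
  have hncb : ∀ w ∈ T.erase {b,a}, ¬ PCross m {v,u} w := by
    intro w hw
    rw [Finset.pair_comm v u]
    exact hnc w (by rwa [Finset.pair_comm b a] at hw)
  have hncb' : ∀ w ∈ T.erase {b,a}, ¬ PCross m {v',u'} w := by
    intro w hw
    rw [Finset.pair_comm v' u']
    exact hnc' w (by rwa [Finset.pair_comm b a] at hw)
  have hv'v : v' = v :=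
    uniq_first hm hT (a := b) (b := a) (u := v) (v := u) (u' := v') (v' := u')
      (by omega) (by omega) (by omega) hsb hncb (by omega) (by omega) (by omega)
      hu'v'.symm hncb'
  rw [hu'u, hv'v]

lemma sideAB (hm : 5 ≤ m) {T₁ T₂ : Finset (Finset (ZMod m))}
    (h1 : PIsTriangulation m T₁) (h2 : PIsTriangulation m T₂)
    {a b c y : ZMod m}
    (hb : 0 < dval a b) (hbc : dval a b < dval a c) (hcy : dval a c < dval a y)
    (hd : ({a,c} : Finset (ZMod m)) ∈ T₁) (he : ({b,y} : Finset (ZMod m)) ∈ T₂)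
    (hEnc : ∀ w ∈ T₁.erase {a,c}, ¬ PCross m {b,y} w)
    (hDnc : ∀ w ∈ T₂.erase {b,y}, ¬ PCross m {a,c} w)
    (hB2 : 2 ≤ dval a b) :
    ({a,b} : Finset (ZMod m)) ∈ T₁ ∧ ({a,b} : Finset (ZMod m)) ∈ T₂ := by
  have h0 := dval_self a
  have bb := dval_lt hm a b; have bc := dval_lt hm a c; have byy := dval_lt hm a y
  have hab : a ≠ b := ne_of_dval_ne a (by omega)
  have hdiag : PIsDiag m {a,b} := by
    rw [diag_pair_iff hm hab]
    have := dval_rev hm hab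
    constructor <;> omega
  constructor
  · refine h1.2.2 _ hdiag ?_
    intro t ht
    intro hc
    rcases eq_or_ne t ({a,c} : Finset (ZMod m)) with rfl | hts
    · exact cross_not_share' (show a ∈ ({a,b}:Finset (ZMod m)) by simp)
        (show a ∈ ({a,c}:Finset (ZMod m)) by simp) hc
    · obtain ⟨p, q, r2, w2, hpq, _, htpq, _, _, _, _, _⟩ := cross_elim' (cross_symm' hm hc)
      refine geom_main hm hb hbc hcy hpq ?_ ?_ (by rw [← htpq]; exact cross_symm' hm hc)
      · rw [← htpq]; exact h1.2.1 t ht _ hd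
      · rw [← htpq]
        exact fun hcc => hEnc t (Finset.mem_erase.mpr ⟨hts, ht⟩) (cross_symm' hm hcc)
  · refine h2.2.2 _ hdiag ?_
    intro t ht
    intro hc
    rcases eq_or_ne t ({b,y} : Finset (ZMod m)) with rfl | hts
    · exact cross_not_share' (show b ∈ ({a,b}:Finset (ZMod m)) by simp)
        (show b ∈ ({b,y}:Finset (ZMod m)) by simp) hc
    · obtain ⟨p, q, r2, w2, hpq, _, htpq, _, _, _, _, _⟩ := cross_elim' (cross_symm' hm hc)
      refine geom_main hm hb hbc hcy hpq ?_ ?_ (by rw [← htpq]; exact cross_symm' hm hc)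
      · rw [← htpq]
        exact fun hcc => hDnc t (Finset.mem_erase.mpr ⟨hts, ht⟩) (cross_symm' hm hcc)
      · rw [← htpq]; exact h2.2.1 t ht _ he

lemma core (hm : 5 ≤ m) {T₁ T₂ : Finset (Finset (ZMod m))}
    (h1 : PIsTriangulation m T₁) (h2 : PIsTriangulation m T₂)
    (hB : flipClosure m T₁ = flipClosure m T₂)
    {a b c y : ZMod m}
    (hb : 0 < dval a b) (hbc : dval a b < dval a c) (hcy : dval a c < dval a y)
    (hd : ({a,c} : Finset (ZMod m)) ∈ T₁) (he : ({b,y} : Finset (ZMod m)) ∈ T₂)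
    (hs1 : ({a,b} : Finset (ZMod m)) ∈ T₁) (hs2 : ({a,b} : Finset (ZMod m)) ∈ T₂)
    (hB2 : 2 ≤ dval a b) : False := by
  classical
  have h0 := dval_self a
  have bb := dval_lt hm a b; have bc := dval_lt hm a c; have byy := dval_lt hm a y
  have hab : a ≠ b := ne_of_dval_ne a (by omega)
  have hac : a ≠ c := ne_of_dval_ne a (by omega)
  have hBm : dval a b + 2 ≤ m := by omega
  obtain ⟨t₀, hcr0, hnc0⟩ := exists_flip_candidate hm h1 hB2 hBm hs1
  obtain ⟨u, v, ht₀uv, huv, hua, hub, hva, hvb, hAU, hAV⟩ := cross_rep hm a hab hcr0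
  subst ht₀uv
  have bu := dval_lt hm a u; have bv := dval_lt hm a v
  have hU : 0 < dval a u ∧ dval a u < dval a b := by unfold natArc at hAU; omega
  have hV : dval a b < dval a v := by
    have hx1 : dval a v ≠ 0 := fun h => hva ((dval_inj hm a).mpr (by rw [h, dval_self]))
    have hx2 := key_ne hm a hvb
    unfold natArc at hAV; omega
  have hds : ({a,c} : Finset (ZMod m)) ≠ {a,b} := by
    intro h
    rcases pair_eq' hac h with ⟨_, h2⟩ | ⟨h1, _⟩
    · exact (ne_of_dval_ne a (show dval a b ≠ dval a c by omega)) h2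
    · exact hac h1
  have hncd : ¬ PCross m {u,v} {a,c} := hnc0 _ (Finset.mem_erase.mpr ⟨hds, hd⟩)
  have hcre : PCross m {u,v} {b,y} := by
    by_contra hcc
    exact geom_main hm hb hbc hcy huv hncd hcc hcr0
  have hdiag0 : PIsDiag m {u,v} := cross_isDiag hm hcr0
  have hnT1 : ({u,v} : Finset (ZMod m)) ∉ T₁ := fun h => h1.2.1 _ h _ hs1 hcr0
  have hdiagS : ∀ d' ∈ insert ({u,v} : Finset (ZMod m)) (T₁.erase {a,b}), PIsDiag m d' := by
    intro d' hd'
    rcases Finset.mem_insert.mp hd' with hd' | hd'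
    · rw [hd']; exact hdiag0
    · exact h1.1 _ (Finset.mem_of_mem_erase hd')
  have hncS : ∀ d' ∈ insert ({u,v} : Finset (ZMod m)) (T₁.erase {a,b}),
      ∀ e' ∈ insert ({u,v} : Finset (ZMod m)) (T₁.erase {a,b}), ¬ PCross m d' e' := by
    intro d' hd' e' he'
    rcases Finset.mem_insert.mp hd' with hd' | hd'
    · rcases Finset.mem_insert.mp he' with he' | he'
      · rw [hd', he']; exact cross_self' _
      · rw [hd']; exact hnc0 _ he'
    · rcases Finset.mem_insert.mp he' with he' | he'
      · rw [he']; exact fun hc => hnc0 _ hd' (cross_symm' hm hc)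
      · exact h1.2.1 _ (Finset.mem_of_mem_erase hd') _ (Finset.mem_of_mem_erase he')
  obtain ⟨M, hSM, hMtri⟩ := exists_tri_ext hm (insert {u,v} (T₁.erase {a,b})) hdiagS hncS
  have htuvM : ({u,v} : Finset (ZMod m)) ∈ M := hSM (Finset.mem_insert_self _ _)
  have hMS : M = insert {u,v} (T₁.erase {a,b}) := by
    apply Finset.Subset.antisymm _ hSM
    intro x hxM
    by_cases hx1 : x ∈ T₁.erase {a,b}
    · exact Finset.mem_insert_of_mem hx1
    · have hxs : x ≠ ({a,b} : Finset (ZMod m)) := by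
        rintro rfl
        exact hMtri.2.1 _ hxM _ htuvM (cross_symm' hm hcr0)
      have hxT1 : x ∉ T₁ := fun h => hx1 (Finset.mem_erase.mpr ⟨hxs, h⟩)
      have hxcs : PCross m x {a,b} := by
        by_contra hcx
        refine hxT1 (h1.2.2 x (hMtri.1 x hxM) ?_)
        intro e' he'
        rcases eq_or_ne e' ({a,b} : Finset (ZMod m)) with rfl | hne'
        · exact hcx
        · exact hMtri.2.1 x hxM e'
            (hSM (Finset.mem_insert_of_mem (Finset.mem_erase.mpr ⟨hne', he'⟩)))
      have hxnc : ∀ w ∈ T₁.erase {a,b}, ¬ PCross m x w := fun w hw =>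
        hMtri.2.1 x hxM w (hSM (Finset.mem_insert_of_mem hw))
      rw [uniq hm h1 hU.1 hU.2 hV hs1 hnc0 hxcs hxnc]
      exact Finset.mem_insert_self _ _
  have htriS : PIsTriangulation m (insert {u,v} (T₁.erase {a,b})) := hMS ▸ hMtri
  have hmem1 : ({u,v} : Finset (ZMod m)) ∈ flipClosure m T₁ := by
    simp only [flipClosure, Set.mem_union, Set.mem_setOf_eq]
    exact Or.inr ⟨{a,b}, hs1, hnT1, hdiag0, htriS⟩
  rw [hB] at hmem1
  simp only [flipClosure, Set.mem_union, Set.mem_setOf_eq] at hmem1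
  rcases hmem1 with hmem | ⟨r, hr, _, _, htri'⟩
  · exact h2.2.1 _ hmem _ hs2 hcr0
  · have hncr : ∀ w ∈ T₂.erase r, ¬ PCross m {u,v} w := fun w hw =>
      htri'.2.1 _ (Finset.mem_insert_self _ _) w (Finset.mem_insert_of_mem hw)
    have hsr : ({a,b} : Finset (ZMod m)) = r := by
      by_contra hne'
      exact hncr _ (Finset.mem_erase.mpr ⟨hne', hs2⟩) hcr0
    have her : ({b,y} : Finset (ZMod m)) = r := by
      by_contra hne'
      exact hncr _ (Finset.mem_erase.mpr ⟨hne', he⟩) hcre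
    have hcontra : ({a,b} : Finset (ZMod m)) = {b,y} := by rw [hsr, her]
    rcases pair_eq' hab hcontra with ⟨h1', _⟩ | ⟨_, h2'⟩
    · exact hab h1'.symm
    · exact (ne_of_dval_ne a (show dval a a ≠ dval a y by omega)) h2'.symm

end main
end StmtAux

open StmtAux

/-- If two triangulations `T₁`, `T₂` of a convex `(n+3)`-gon (`n ≥ 2`) satisfy
`B_{T₁} = B_{T₂}`, then `T₁ = T₂`. -/
theorem stmt_14 (n : ℕ) (hn : 2 ≤ n) (T₁ T₂ : Finset (Finset (ZMod (n + 3))))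
    (h1 : PIsTriangulation (n + 3) T₁) (h2 : PIsTriangulation (n + 3) T₂)
    (hB : flipClosure (n + 3) T₁ = flipClosure (n + 3) T₂) :
    T₁ = T₂ := by
  classical
  have hm : 5 ≤ n + 3 := by omega
  by_contra hne
  have hex : ∃ d, d ∈ T₁ ∧ d ∉ T₂ := by
    by_contra h
    push_neg at h
    exact hne (tri_subset_eq h1 h2 (fun x hx => h x hx))
  obtain ⟨d, hd1, hd2⟩ := hex
  have hdB : d ∈ flipClosure (n+3) T₂ := by rw [← hB]; exact mem_flip_left hd1
  obtain ⟨e, he2, hcde, hdnc, _⟩ := flip_mem_analysis hm h2 hdB hd2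
  have hed1 : e ∉ T₁ := fun h => h1.2.1 d hd1 e h hcde
  have heB : e ∈ flipClosure (n+3) T₁ := by rw [hB]; exact mem_flip_left he2
  obtain ⟨d₀, hd₀1, _, henc₀, _⟩ := flip_mem_analysis hm h1 heB hed1
  have hd₀d : d₀ = d := by
    by_contra hnedd
    exact henc₀ d (Finset.mem_erase.mpr ⟨fun h => hnedd h.symm, hd1⟩) (cross_symm' hm hcde)
  subst hd₀d
  obtain ⟨a, b, c, y, hdac, heby, hb, hbc, hcy, hy⟩ := cross_cycord hm hcde
  subst hdac; subst heby
  have h0 := dval_self a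
  have bb := dval_lt hm a b
  have hab : a ≠ b := ne_of_dval_ne a (by omega)
  have hac : a ≠ c := ne_of_dval_ne a (by omega)
  have hay : a ≠ y := ne_of_dval_ne a (by omega)
  have hrb := dval_rev hm hab
  have hrc := dval_rev hm hac
  have hry := dval_rev hm hay
  rcases (show 2 ≤ dval a b ∨ dval a b + 2 ≤ dval a c ∨ dval a c + 2 ≤ dval a y ∨
      dval a y + 2 ≤ n + 3 from by omega) with hg | hg | hg | hg
  · -- side {a,b}
    obtain ⟨hsT1, hsT2⟩ := sideAB hm h1 h2 hb hbc hcy hd1 he2 henc₀ hdnc hg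
    exact core hm h1 h2 hB hb hbc hcy hd1 he2 hsT1 hsT2 hg
  · -- side {b,c} : configuration (b,c,y,a), triangulations swapped
    have f1 : dval b c = dval a c - dval a b := dval_le_case hm a (by omega)
    have f2 : dval b y = dval a y - dval a b := dval_le_case hm a (by omega)
    have f3 : dval b a = (n+3) - dval a b := by omega
    have he' : ({c,a} : Finset (ZMod (n+3))) ∈ T₁ := by
      rw [Finset.pair_comm c a]; exact hd1
    have hEnc' : ∀ w ∈ T₂.erase {b,y}, ¬ PCross (n+3) {c,a} w := by
      intro w hw
      rw [Finset.pair_comm c a]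
      exact hdnc w hw
    have hDnc' : ∀ w ∈ T₁.erase {c,a}, ¬ PCross (n+3) {b,y} w := by
      intro w hw
      exact henc₀ w (by rwa [Finset.pair_comm c a] at hw)
    obtain ⟨hsT2', hsT1'⟩ := sideAB hm h2 h1 (by omega) (by omega) (by omega)
      he2 he' hEnc' hDnc' (by omega)
    exact core hm h2 h1 hB.symm (by omega) (by omega) (by omega)
      he2 he' hsT2' hsT1' (by omega)
  · -- side {c,y} : configuration (c,y,a,b)
    have f1 : dval c y = dval a y - dval a c := dval_le_case hm a (by omega)
    have f2 : dval c a = (n+3) - dval a c := by omega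
    have f3 : dval c b = dval a b + (n+3) - dval a c := dval_gt_case hm a (by omega)
    have hd' : ({c,a} : Finset (ZMod (n+3))) ∈ T₁ := by
      rw [Finset.pair_comm c a]; exact hd1
    have he' : ({y,b} : Finset (ZMod (n+3))) ∈ T₂ := by
      rw [Finset.pair_comm y b]; exact he2
    have hEnc' : ∀ w ∈ T₁.erase {c,a}, ¬ PCross (n+3) {y,b} w := by
      intro w hw
      rw [Finset.pair_comm y b]
      exact henc₀ w (by rwa [Finset.pair_comm c a] at hw)
    have hDnc' : ∀ w ∈ T₂.erase {y,b}, ¬ PCross (n+3) {c,a} w := by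
      intro w hw
      rw [Finset.pair_comm c a]
      exact hdnc w (by rwa [Finset.pair_comm y b] at hw)
    obtain ⟨hsT1', hsT2'⟩ := sideAB hm h1 h2 (by omega) (by omega) (by omega)
      hd' he' hEnc' hDnc' (by omega)
    exact core hm h1 h2 hB (by omega) (by omega) (by omega)
      hd' he' hsT1' hsT2' (by omega)
  · -- side {y,a} : configuration (y,a,b,c), triangulations swapped
    have f1 : dval y a = (n+3) - dval a y := by omega
    have f2 : dval y b = dval a b + (n+3) - dval a y := dval_gt_case hm a (by omega)
    have f3 : dval y c = dval a c + (n+3) - dval a y := dval_gt_case hm a (by omega)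
    have hd' : ({y,b} : Finset (ZMod (n+3))) ∈ T₂ := by
      rw [Finset.pair_comm y b]; exact he2
    have hEnc' : ∀ w ∈ T₂.erase {y,b}, ¬ PCross (n+3) {a,c} w := by
      intro w hw
      exact hdnc w (by rwa [Finset.pair_comm y b] at hw)
    have hDnc' : ∀ w ∈ T₁.erase {a,c}, ¬ PCross (n+3) {y,b} w := by
      intro w hw
      rw [Finset.pair_comm y b]
      exact henc₀ w hw
    obtain ⟨hsT2', hsT1'⟩ := sideAB hm h2 h1 (by omega) (by omega) (by omega)
      hd' hd1 hEnc' hDnc' (by omega)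
    exact core hm h2 h1 hB.symm (by omega) (by omega) (by omega)
      hd' hd1 hsT2' hsT1' (by omega)
end

section
/- If T₁ and T₂ are triangulations of a convex polygon such that every diagonal of T₂ not in T₁ crosses exactly one diagonal of T₁, then T₂ is obtained from T₁ by simultaneously flipping a set of diagonals of T₁ no two of which belong to a common triangle of T₁; that is, each diagonal pr ∈ T₂ \ T₁ crosses a unique diagonal qs ∈ T₁ and pqr, prs are triangles of T₂. -/
/-- `a` and `b` are joined by a boundary edge of the polygon or by a diagonal of `T`. -/
def PEdgeOrDiag (m : ℕ) (T : Finset (Finset (ZMod m))) (a b : ZMod m) : Prop :=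
  (b - a = 1 ∨ a - b = 1) ∨ ({a, b} : Finset (ZMod m)) ∈ T

/-- `p q r` form a triangle of the triangulation `T`. -/
def PTriangleOf (m : ℕ) (T : Finset (Finset (ZMod m))) (p q r : ZMod m) : Prop :=
  p ≠ q ∧ q ≠ r ∧ p ≠ r ∧
  PEdgeOrDiag m T p q ∧ PEdgeOrDiag m T q r ∧ PEdgeOrDiag m T p r

def betN (A X B : ℕ) : Prop := (A < X ∧ X < B) ∨ (B < A ∧ (A < X ∨ X < B))

lemma val_sub' (m : ℕ) [NeZero m] (u v : ZMod m) : (u - v).val = (m + u.val - v.val) % m := by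
  have h1 : v.val ≤ m + u.val := by have := v.val_lt; omega
  have h2 : ((m + u.val - v.val : ℕ) : ZMod m) = u - v := by
    push_cast [Nat.cast_sub h1]
    simp [ZMod.natCast_val, ZMod.natCast_self]
  rw [← h2, ZMod.val_natCast]

lemma modc1 {m A X : ℕ} (hX : X < m) (hAX : A ≤ X) : (m+X-A)%m = X - A := by
  rw [show m+X-A = m+(X-A) by omega, Nat.add_mod_left, Nat.mod_eq_of_lt (by omega)]

lemma modc2 {m A X : ℕ} (hA : A < m) (hAX : X < A) : (m+X-A)%m = m+X-A := by
  rw [Nat.mod_eq_of_lt (by omega)]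

lemma pbetween_iff (m : ℕ) [NeZero m] (o a x b : ZMod m) :
    Pbetween m a x b ↔ betN ((a-o).val) ((x-o).val) ((b-o).val) := by
  have hx := (x-o).val_lt; have ha := (a-o).val_lt; have hb := (b-o).val_lt
  have h1 : x - a = (x-o) - (a-o) := by ring
  have h2 : b - a = (b-o) - (a-o) := by ring
  have e1 : (x - a).val = (m + (x-o).val - (a-o).val) % m := by rw [h1]; exact val_sub' m _ _
  have e2 : (b - a).val = (m + (b-o).val - (a-o).val) % m := by rw [h2]; exact val_sub' m _ _
  rw [Pbetween, e1, e2, betN]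
  rcases le_or_gt ((a-o).val) ((x-o).val) with h | h <;>
    rcases le_or_gt ((a-o).val) ((b-o).val) with h' | h'
  · rw [modc1 hx h, modc1 hb h']; omega
  · rw [modc1 hx h, modc2 ha h']; omega
  · rw [modc2 ha h, modc1 hb h']; omega
  · rw [modc2 ha h, modc2 ha h']; omega
lemma pair_eq' {α : Type*} [DecidableEq α] {a b c d : α} (h : ({a,b} : Finset α) = {c,d})
    (hab : a ≠ b) : (a = c ∧ b = d) ∨ (a = d ∧ b = c) := by
  have ha : a ∈ ({c,d} : Finset α) := h ▸ by simp
  have hb : b ∈ ({c,d} : Finset α) := h ▸ by simp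
  simp only [Finset.mem_insert, Finset.mem_singleton] at ha hb
  rcases ha with rfl | rfl <;> rcases hb with rfl | rfl <;> tauto

lemma coord_ne {m : ℕ} [NeZero m] {o a b : ZMod m} (h : a ≠ b) : (a-o).val ≠ (b-o).val := by
  intro h'
  exact h (by have := ZMod.val_injective m h'; exact sub_left_injective this)

lemma ne_of_coord {m : ℕ} {o a b : ZMod m} (h : (a-o).val ≠ (b-o).val) : a ≠ b :=
  fun h' => h (by rw [h'])

lemma xor_swap {A B C D : ℕ} (hAB : A ≠ B) (hAC : A ≠ C) (hAD : A ≠ D)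
    (hBC : B ≠ C) (hBD : B ≠ D)
    (hx : Xor' (betN A C B) (betN A D B)) : Xor' (betN B C A) (betN B D A) := by
  simp only [Xor', Xor, betN] at *; omega

lemma pcross_coord (m : ℕ) [NeZero m] (o : ZMod m) {x y z w : ZMod m} (hxy : x ≠ y)
    (hzw : z ≠ w) :
    PCross m {x,y} {z,w} ↔ x ≠ z ∧ x ≠ w ∧ y ≠ z ∧ y ≠ w ∧
      Xor' (betN ((x-o).val) ((z-o).val) ((y-o).val))
           (betN ((x-o).val) ((w-o).val) ((y-o).val)) := by
  constructor
  · rintro ⟨a, b, c, d, hab, hcd, h1, h2, h3, h4, h5, h6, hx⟩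
    rw [pbetween_iff m o, pbetween_iff m o] at hx
    rcases pair_eq' hab hxy with ⟨rfl, rfl⟩ | ⟨rfl, rfl⟩ <;>
      rcases pair_eq' hcd hzw with ⟨rfl, rfl⟩ | ⟨rfl, rfl⟩
    · exact ⟨h2, h3, h4, h5, hx⟩
    · refine ⟨h3, h2, h5, h4, ?_⟩
      simp only [Xor', Xor] at hx ⊢; tauto
    · refine ⟨h4, h5, h2, h3, ?_⟩
      exact xor_swap (coord_ne h1) (coord_ne h2) (coord_ne h3) (coord_ne h4) (coord_ne h5) hx
    · refine ⟨h5, h4, h3, h2, ?_⟩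
      have := xor_swap (coord_ne h1) (coord_ne h2) (coord_ne h3) (coord_ne h4) (coord_ne h5) hx
      simp only [Xor', Xor] at this ⊢; tauto
  · rintro ⟨h1, h2, h3, h4, hx⟩
    refine ⟨x, y, z, w, rfl, rfl, hxy, h1, h2, h3, h4, hzw, ?_⟩
    rw [pbetween_iff m o, pbetween_iff m o]
    exact hx

lemma xor_sep {A B C D : ℕ} (hAB : A ≠ B) (hAC : A ≠ C) (hAD : A ≠ D)
    (hBC : B ≠ C) (hBD : B ≠ D) (hCD : C ≠ D)
    (hx : Xor' (betN A C B) (betN A D B)) : Xor' (betN C A D) (betN C B D) := by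
  simp only [Xor', Xor, betN] at *; omega

lemma pcross_symm {m : ℕ} [NeZero m] {d e : Finset (ZMod m)} (h : PCross m d e) :
    PCross m e d := by
  obtain ⟨a, b, c, d', rfl, rfl, h1, h2, h3, h4, h5, h6, hx⟩ := h
  rw [pbetween_iff m a, pbetween_iff m a] at hx
  refine (pcross_coord m a h6 h1).mpr ⟨h2.symm, h4.symm, h3.symm, h5.symm, ?_⟩
  exact xor_sep (coord_ne h1) (coord_ne h2) (coord_ne h3) (coord_ne h4) (coord_ne h5)
    (coord_ne h6) hx

lemma pcross_disjoint {m : ℕ} {d e : Finset (ZMod m)} (h : PCross m d e) {t : ZMod m}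
    (ht : t ∈ d) (ht' : t ∈ e) : False := by
  obtain ⟨a, b, c, d', rfl, rfl, h1, h2, h3, h4, h5, h6, -⟩ := h
  simp only [Finset.mem_insert, Finset.mem_singleton] at ht ht'
  rcases ht with rfl | rfl <;> rcases ht' with rfl | rfl <;> simp_all

lemma edge_symm {m : ℕ} {T : Finset (Finset (ZMod m))} {a b : ZMod m}
    (h : PEdgeOrDiag m T a b) : PEdgeOrDiag m T b a := by
  rcases h with h | h
  · exact Or.inl h.symm
  · exact Or.inr (by rwa [Finset.pair_comm])

lemma tri_swap23 {m : ℕ} {T : Finset (Finset (ZMod m))} {a b c : ZMod m}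
    (h : PTriangleOf m T a b c) : PTriangleOf m T a c b := by
  obtain ⟨h1, h2, h3, e1, e2, e3⟩ := h
  exact ⟨h3, h2.symm, h1, e3, edge_symm e2, e1⟩

lemma ne_of_pair_eq {α : Type*} [DecidableEq α] {x y a b : α} (h : ({x,y} : Finset α) = {a,b})
    (hab : a ≠ b) : x ≠ y := by
  rintro rfl
  have ha : a ∈ ({x,x} : Finset α) := by rw [h]; simp
  have hb : b ∈ ({x,x} : Finset α) := by rw [h]; simp
  simp only [Finset.mem_insert, Finset.mem_singleton, or_self] at ha hb
  exact hab (ha.trans hb.symm)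

lemma dich_arith {Q R S X Y U V : ℕ} (h0 : 0 < Q) (h1 : Q < R) (h2 : R < S)
    (hXY : (X = 0 ∧ Y = Q) ∨ (X = Q ∧ Y = R) ∨ (X = R ∧ Y = S) ∨ (X = S ∧ Y = 0))
    (hUV : U ≠ V) (hUX : U ≠ X) (hUY : U ≠ Y) (hVX : V ≠ X) (hVY : V ≠ Y)
    (hx : Xor' (betN X U Y) (betN X V Y)) :
    (U ≠ Q ∧ U ≠ S ∧ V ≠ Q ∧ V ≠ S ∧ Xor' (betN U Q V) (betN U S V)) ∨
    (U ≠ 0 ∧ U ≠ R ∧ V ≠ 0 ∧ V ≠ R ∧ Xor' (betN U 0 V) (betN U R V)) := by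
  simp only [Xor', Xor, betN] at *; omega

lemma step (m : ℕ) [NeZero m] (T₁ T₂ : Finset (Finset (ZMod m)))
    (h1 : PIsTriangulation m T₁) (h2 : PIsTriangulation m T₂)
    (hone : ∀ d ∈ T₂, d ∉ T₁ → ∃! e, e ∈ T₁ ∧ PCross m d e)
    (p q r s x y : ZMod m)
    (hd2 : ({p,r} : Finset (ZMod m)) ∈ T₂) (he : ({q,s} : Finset (ZMod m)) ∈ T₁)
    (huniq : ∀ f ∈ T₁, PCross m {p,r} f → f = ({q,s} : Finset (ZMod m)))
    (hQ : 0 < (q-p).val) (hQR : (q-p).val < (r-p).val) (hRS : (r-p).val < (s-p).val)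
    (hXY : ((x-p).val = 0 ∧ (y-p).val = (q-p).val) ∨
      ((x-p).val = (q-p).val ∧ (y-p).val = (r-p).val) ∨
      ((x-p).val = (r-p).val ∧ (y-p).val = (s-p).val) ∨
      ((x-p).val = (s-p).val ∧ (y-p).val = 0))
    (hmeet : ¬ PCross m {x,y} {q,s})
    (hnoteq : ({x,y} : Finset (ZMod m)) ≠ {q,s}) :
    PEdgeOrDiag m T₂ x y := by
  have hP : (p-p).val = 0 := by simp
  have hqs : q ≠ s := ne_of_coord (o := p) (by omega)
  have hpr : p ≠ r := ne_of_coord (o := p) (by omega)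
  by_cases hadj : (y - x = 1 ∨ x - y = 1)
  · exact Or.inl hadj
  push_neg at hadj
  have hxy : x ≠ y := ne_of_coord (o := p) (by omega)
  have hdiag : PIsDiag m {x,y} := ⟨x, y, rfl, hxy, hadj.2, hadj.1⟩
  have hA : ({x,y} : Finset (ZMod m)) ∈ T₁ := by
    by_contra hnot
    have hex : ∃ f ∈ T₁, PCross m {x,y} f := by
      by_contra hno; push_neg at hno
      exact hnot (h1.2.2 _ hdiag hno)
    obtain ⟨f, hf, hcf⟩ := hex
    obtain ⟨u, v, hfe, huv, -, -⟩ := h1.1 f hf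
    subst hfe
    obtain ⟨n1, n2, n3, n4, hx⟩ := (pcross_coord m p hxy huv).mp hcf
    rcases dich_arith hQ hQR hRS hXY (coord_ne huv) (coord_ne n1.symm) (coord_ne n3.symm)
        (coord_ne n2.symm) (coord_ne n4.symm) hx with
      ⟨m1, m2, m3, m4, hxor⟩ | ⟨m1, m2, m3, m4, hxor⟩
    · have hc : PCross m {u,v} {q,s} := (pcross_coord m p huv hqs).mpr
        ⟨ne_of_coord m1, ne_of_coord m2, ne_of_coord m3, ne_of_coord m4, hxor⟩
      exact h1.2.1 _ hf _ he hc
    · have hc : PCross m {u,v} {p,r} := (pcross_coord m p huv hpr).mpr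
        ⟨ne_of_coord (o := p) (by omega), ne_of_coord m2,
         ne_of_coord (o := p) (by omega), ne_of_coord m4, by rw [hP]; exact hxor⟩
      have heq := huniq _ hf (pcross_symm hc)
      rw [heq] at hcf
      exact hmeet hcf
  by_cases hxy2 : ({x,y} : Finset (ZMod m)) ∈ T₂
  · exact Or.inr hxy2
  exfalso
  have hex : ∃ f ∈ T₂, PCross m {x,y} f := by
    by_contra hno; push_neg at hno
    exact hxy2 (h2.2.2 _ hdiag hno)
  obtain ⟨f, hf, hcf⟩ := hex
  obtain ⟨u, v, hfe, huv, -, -⟩ := h2.1 f hf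
  subst hfe
  have hf1 : ({u,v} : Finset (ZMod m)) ∉ T₁ := fun h' => h1.2.1 _ hA _ h' hcf
  obtain ⟨e₀, he₀, hu⟩ := hone _ hf hf1
  have hxye : ({x,y} : Finset (ZMod m)) = e₀ := hu _ ⟨hA, pcross_symm hcf⟩
  obtain ⟨n1, n2, n3, n4, hx⟩ := (pcross_coord m p hxy huv).mp hcf
  rcases dich_arith hQ hQR hRS hXY (coord_ne huv) (coord_ne n1.symm) (coord_ne n3.symm)
      (coord_ne n2.symm) (coord_ne n4.symm) hx with
    ⟨m1, m2, m3, m4, hxor⟩ | ⟨m1, m2, m3, m4, hxor⟩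
  · have hc : PCross m {u,v} {q,s} := (pcross_coord m p huv hqs).mpr
      ⟨ne_of_coord m1, ne_of_coord m2, ne_of_coord m3, ne_of_coord m4, hxor⟩
    have h' : ({q,s} : Finset (ZMod m)) = e₀ := hu _ ⟨he, hc⟩
    exact hnoteq (hxye.trans h'.symm)
  · have hc : PCross m {u,v} {p,r} := (pcross_coord m p huv hpr).mpr
      ⟨ne_of_coord (o := p) (by omega), ne_of_coord m2,
       ne_of_coord (o := p) (by omega), ne_of_coord m4, by rw [hP]; exact hxor⟩
    exact h2.2.1 _ hf _ hd2 hc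

lemma main_lemma (m : ℕ) (hm : 5 ≤ m) (T₁ T₂ : Finset (Finset (ZMod m)))
    (h1 : PIsTriangulation m T₁) (h2 : PIsTriangulation m T₂)
    (hone : ∀ d ∈ T₂, d ∉ T₁ → ∃! e, e ∈ T₁ ∧ PCross m d e)
    (p q r s : ZMod m)
    (hd2 : ({p,r} : Finset (ZMod m)) ∈ T₂) (hd1 : ({p,r} : Finset (ZMod m)) ∉ T₁)
    (he : ({q,s} : Finset (ZMod m)) ∈ T₁)
    (hQ : 0 < (q-p).val) (hQR : (q-p).val < (r-p).val) (hRS : (r-p).val < (s-p).val) :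
    PTriangleOf m T₂ p q r ∧ PTriangleOf m T₂ p r s := by
  haveI : NeZero m := ⟨by omega⟩
  have hP : (p-p).val = 0 := by simp
  have hpq : p ≠ q := ne_of_coord (o := p) (by omega)
  have hpr : p ≠ r := ne_of_coord (o := p) (by omega)
  have hps : p ≠ s := ne_of_coord (o := p) (by omega)
  have hqr : q ≠ r := ne_of_coord (o := p) (by omega)
  have hqs : q ≠ s := ne_of_coord (o := p) (by omega)
  have hrs : r ≠ s := ne_of_coord (o := p) (by omega)
  have hcqs : PCross m {p,r} {q,s} := (pcross_coord m p hpr hqs).mpr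
    ⟨hpq, hps, hqr.symm, hrs, by simp only [Xor', Xor, betN]; omega⟩
  have huniq : ∀ f ∈ T₁, PCross m {p,r} f → f = ({q,s} : Finset (ZMod m)) := by
    obtain ⟨e₀, he₀, hu⟩ := hone _ hd2 hd1
    have h₀ : ({q,s} : Finset (ZMod m)) = e₀ := hu _ ⟨he, hcqs⟩
    intro f hf hc
    rw [hu f ⟨hf, hc⟩, ← h₀]
  have E1 : PEdgeOrDiag m T₂ p q := by
    refine step m T₁ T₂ h1 h2 hone p q r s p q hd2 he huniq hQ hQR hRS
      (Or.inl ⟨hP, rfl⟩) (fun hc => pcross_disjoint hc (t := q) (by simp) (by simp)) ?_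
    intro h
    have : p ∈ ({q,s} : Finset (ZMod m)) := h ▸ by simp
    simp only [Finset.mem_insert, Finset.mem_singleton] at this
    tauto
  have E2 : PEdgeOrDiag m T₂ q r := by
    refine step m T₁ T₂ h1 h2 hone p q r s q r hd2 he huniq hQ hQR hRS
      (Or.inr (Or.inl ⟨rfl, rfl⟩)) (fun hc => pcross_disjoint hc (t := q) (by simp) (by simp)) ?_
    intro h
    have : r ∈ ({q,s} : Finset (ZMod m)) := h ▸ by simp
    simp only [Finset.mem_insert, Finset.mem_singleton] at this
    tauto
  have E3 : PEdgeOrDiag m T₂ r s := by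
    refine step m T₁ T₂ h1 h2 hone p q r s r s hd2 he huniq hQ hQR hRS
      (Or.inr (Or.inr (Or.inl ⟨rfl, rfl⟩)))
      (fun hc => pcross_disjoint hc (t := s) (by simp) (by simp)) ?_
    intro h
    have : r ∈ ({q,s} : Finset (ZMod m)) := h ▸ by simp
    simp only [Finset.mem_insert, Finset.mem_singleton] at this
    tauto
  have E4 : PEdgeOrDiag m T₂ s p := by
    refine step m T₁ T₂ h1 h2 hone p q r s s p hd2 he huniq hQ hQR hRS
      (Or.inr (Or.inr (Or.inr ⟨rfl, hP⟩)))
      (fun hc => pcross_disjoint hc (t := s) (by simp) (by simp)) ?_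
    intro h
    have : p ∈ ({q,s} : Finset (ZMod m)) := h ▸ by simp
    simp only [Finset.mem_insert, Finset.mem_singleton] at this
    tauto
  exact ⟨⟨hpq, hqr, hpr, E1, E2, Or.inr hd2⟩,
    ⟨hpr, hrs, hps, Or.inr hd2, E3, edge_symm E4⟩⟩

/-- If every diagonal of `T₂` not in `T₁` crosses exactly one diagonal of `T₁`, then `T₂` is
obtained from `T₁` by simultaneously flipping diagonals of `T₁`: each `pr ∈ T₂ \ T₁` crosses a
unique `qs ∈ T₁`, and `pqr`, `prs` are triangles of `T₂`. -/
theorem stmt_15 (m : ℕ) (hm : 5 ≤ m) (T₁ T₂ : Finset (Finset (ZMod m)))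
    (h1 : PIsTriangulation m T₁) (h2 : PIsTriangulation m T₂)
    (hone : ∀ d ∈ T₂, d ∉ T₁ → ∃! e, e ∈ T₁ ∧ PCross m d e) :
    ∀ d ∈ T₂, d ∉ T₁ →
      (∃! e, e ∈ T₁ ∧ PCross m d e) ∧
      ∀ e ∈ T₁, PCross m d e →
        ∀ p r q s : ZMod m, d = {p, r} → e = {q, s} →
          PTriangleOf m T₂ p q r ∧ PTriangleOf m T₂ p r s := by
  haveI : NeZero m := ⟨by omega⟩
  intro d hd2 hd1
  refine ⟨hone d hd2 hd1, ?_⟩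
  intro e he hcr p r q s hdpr heqs
  subst hdpr heqs
  have hpr : p ≠ r := by
    obtain ⟨a, b, c, d', h1', h2', hab, -, -, -, -, -, -⟩ := hcr
    exact ne_of_pair_eq h1' hab
  have hqs : q ≠ s := by
    obtain ⟨a, b, c, d', h1', h2', -, -, -, -, -, hcd, -⟩ := hcr
    exact ne_of_pair_eq h2' hcd
  have hP : (p-p).val = 0 := by simp
  obtain ⟨hpq, hps, hrq, hrs, hxor⟩ := (pcross_coord m p hpr hqs).mp hcr
  have kpq := coord_ne (o := p) hpq
  have kps := coord_ne (o := p) hps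
  have krq := coord_ne (o := p) hrq
  have krs := coord_ne (o := p) hrs
  have kpr := coord_ne (o := p) hpr
  have kqs := coord_ne (o := p) hqs
  rcases hxor with ⟨hb1, hb2⟩ | ⟨hb1, hb2⟩
  · have hc : 0 < (q-p).val ∧ (q-p).val < (r-p).val ∧ (r-p).val < (s-p).val := by
      simp only [betN] at hb1 hb2; omega
    exact main_lemma m hm T₁ T₂ h1 h2 hone p q r s hd2 hd1 he hc.1 hc.2.1 hc.2.2
  · have hc : 0 < (s-p).val ∧ (s-p).val < (r-p).val ∧ (r-p).val < (q-p).val := by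
      simp only [betN] at hb1 hb2; omega
    have he' : ({s,q} : Finset (ZMod m)) ∈ T₁ := by rwa [Finset.pair_comm]
    obtain ⟨t1, t2⟩ := main_lemma m hm T₁ T₂ h1 h2 hone p s r q hd2 hd1 he' hc.1 hc.2.1 hc.2.2
    exact ⟨tri_swap23 t2, tri_swap23 t1⟩
end

section
/- For a triangulation T of a convex polygon whose dual tree is known, the set of normal vectors A(T) = {−αᵢ : i ∈ [n]} ∪ {Σ_{i ∈ p} αᵢ : p a path in the dual tree 𝒯 with edges labeled 1,...,n} determines 𝒯 up to isomorphism; in particular, two trees 𝒯₁, 𝒯₂ with n edges admit a bijection between their edge sets sending edge sets of paths to edge sets of paths if and only if 𝒯₁ and 𝒯₂ are isomorphic as graphs. -/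
/-- `E` is the edge set of some (simple) path in the graph `G`. -/
def IsPathEdgeSet {V : Type*} (G : SimpleGraph V) (E : Set (Sym2 V)) : Prop :=
  ∃ (u v : V) (p : G.Walk u v), p.IsPath ∧ {e | e ∈ p.edges} = E

open SimpleGraph

lemma path2_of_adj {V : Type*} {G : SimpleGraph V} {e f : Sym2 V}
    (he : e ∈ G.edgeSet) (hf : f ∈ G.edgeSet) (hef : e ≠ f) {v : V}
    (hv : v ∈ e) (hv' : v ∈ f) : IsPathEdgeSet G {e, f} := by
  set a := Sym2.Mem.other hv with ha
  set b := Sym2.Mem.other hv' with hb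
  have hea : s(v, a) = e := Sym2.other_spec hv
  have hfb : s(v, b) = f := Sym2.other_spec hv'
  have hav : a ≠ v := Sym2.other_ne (G.not_isDiag_of_mem_edgeSet he) hv
  have hbv : b ≠ v := Sym2.other_ne (G.not_isDiag_of_mem_edgeSet hf) hv'
  have hab : a ≠ b := by
    intro h; apply hef; rw [← hea, ← hfb, h]
  have h1 : G.Adj a v := (G.mem_edgeSet.mp (hea ▸ he)).symm
  have h2 : G.Adj v b := G.mem_edgeSet.mp (hfb ▸ hf)
  refine ⟨a, b, .cons h1 (.cons h2 .nil), ?_, ?_⟩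
  · simp [Walk.isPath_def, hav, hab, hbv.symm]
  · ext x
    simp only [Walk.edges_cons, Walk.edges_nil, List.mem_cons, List.not_mem_nil, or_false,
      Set.mem_setOf_eq, Set.mem_insert_iff, Set.mem_singleton_iff]
    rw [Sym2.eq_swap] at hea
    rw [hea, hfb]

lemma adj_of_path2 {V : Type*} {G : SimpleGraph V} {e f : Sym2 V}
    (h : IsPathEdgeSet G {e, f}) (hef : e ≠ f) : ∃ v, v ∈ e ∧ v ∈ f := by
  classical
  obtain ⟨u, w, p, hp, hset⟩ := h
  have hnd : p.edges.Nodup := hp.isTrail.edges_nodup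
  have hmem : ∀ x, x ∈ p.edges ↔ x = e ∨ x = f := by
    intro x
    have := Set.ext_iff.mp hset x
    simpa using this
  have hlen : p.edges.length = 2 := by
    have h1 : p.edges.toFinset = {e, f} := by
      ext x; simp [hmem, hef]
    have h2 : p.edges.toFinset.card = 2 := by
      rw [h1]; rw [Finset.card_insert_of_notMem (by simp [hef])]; simp
    rw [← List.toFinset_card_of_nodup hnd, h2]
  rw [p.length_edges] at hlen
  match p, hlen with
  | .cons (v := x) h1 (.cons (v := y) h2 q), hlen =>
    have hq : q.edges = [] := List.length_eq_zero_iff.mp (by rw [q.length_edges]; simp only [Walk.length_cons] at hlen; omega)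
    have he' : e ∈ (Walk.cons h1 (Walk.cons h2 q)).edges := (hmem e).mpr (Or.inl rfl)
    have hf' : f ∈ (Walk.cons h1 (Walk.cons h2 q)).edges := (hmem f).mpr (Or.inr rfl)
    simp only [Walk.edges_cons, hq, List.mem_cons, List.not_mem_nil, or_false] at he' hf'
    refine ⟨x, ?_, ?_⟩
    · rcases he' with h | h <;> rw [h] <;> simp
    · rcases hf' with h | h <;> rw [h] <;> simp
open SimpleGraph

lemma walk_closed {V : Type*} {G : SimpleGraph V} (S : Set V)
    (hcl : ∀ ⦃x y : V⦄, G.Adj x y → x ∈ S → y ∈ S) :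
    ∀ {u v : V} (_ : G.Walk u v), u ∈ S → v ∈ S := by
  intro u v p
  induction p with
  | nil => exact id
  | cons h q ih => exact fun hu => ih (hcl h hu)

lemma exists_incident {V : Type*} {G : SimpleGraph V} (hc : G.Connected)
    (e₀ : G.edgeSet) (v : V) : ∃ e : G.edgeSet, v ∈ e.1 := by
  by_contra hno
  push_neg at hno
  rcases e₀ with ⟨e, he⟩
  induction e using Sym2.ind with
  | _ x y =>
    have hx : x ∈ ({v} : Set V) := by
      refine walk_closed {v} ?_ (hc.preconnected v x).some rfl
      intro a b hab ha
      rw [Set.mem_singleton_iff] at ha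
      subst ha
      exact (hno ⟨s(a,b), hab⟩ (Sym2.mem_mk_left a b)).elim
    rw [Set.mem_singleton_iff] at hx
    subst hx
    exact hno ⟨s(x,y), he⟩ (Sym2.mem_mk_left x y)
open SimpleGraph

lemma sym2_eq {V : Type*} {x y : V} {e f : Sym2 V} (hxy : x ≠ y)
    (h1 : x ∈ e) (h2 : y ∈ e) (h3 : x ∈ f) (h4 : y ∈ f) : e = f :=
  (Sym2.mem_and_mem_iff hxy).mp ⟨h1, h2⟩ |>.trans ((Sym2.mem_and_mem_iff hxy).mp ⟨h3, h4⟩).symm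

lemma tri_free' {V : Type*} {G : SimpleGraph V} (hG : G.IsAcyclic)
    {a b c : V} (hab : G.Adj a b) (hbc : G.Adj b c) (hca : G.Adj c a) : False := by
  have hac : a ≠ c := fun h => G.irrefl (h ▸ hca)
  refine hG (.cons hab (.cons hbc (.cons hca .nil))) ⟨⟨?_, by simp⟩, ?_⟩
  · simp [Walk.isTrail_def, Sym2.eq_iff]
    aesop
  · simp
    exact ⟨⟨hbc.ne, hab.ne'⟩, Ne.symm hac⟩

/-- adjacency of two edges via a vertex, as `G.Adj` of endpoints -/
lemma adj_of_edge {V : Type*} {G : SimpleGraph V} {e : Sym2 V} (he : e ∈ G.edgeSet)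
    {x y : V} (hxy : x ≠ y) (hx : x ∈ e) (hy : y ∈ e) : G.Adj x y := by
  have : e = s(x, y) := (Sym2.mem_and_mem_iff hxy).mp ⟨hx, hy⟩
  rw [this] at he
  exact G.mem_edgeSet.mp he

lemma star_map {V₁ V₂ : Type*} {G₁ : SimpleGraph V₁} {G₂ : SimpleGraph V₂}
    (h2 : G₂.IsAcyclic) (φ : G₁.edgeSet ≃ G₂.edgeSet)
    (hadj : ∀ (e f : G₁.edgeSet), e ≠ f →
      ((∃ v, v ∈ e.1 ∧ v ∈ f.1) ↔ (∃ w, w ∈ (φ e).1 ∧ w ∈ (φ f).1)))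
    {e f : G₁.edgeSet} (hef : e ≠ f) {w : V₁} (hwe : w ∈ e.1) (hwf : w ∈ f.1)
    {d : V₂} (hde : d ∈ (φ e).1) (hdf : d ∈ (φ f).1) :
    ∀ g : G₁.edgeSet, w ∈ g.1 → d ∈ (φ g).1 := by
  intro g hwg
  by_cases hge : g = e
  · rw [hge]; exact hde
  by_cases hgf : g = f
  · rw [hgf]; exact hdf
  obtain ⟨d₁, hd₁e, hd₁g⟩ := (hadj e g (Ne.symm hge)).mp ⟨w, hwe, hwg⟩
  obtain ⟨d₂, hd₂f, hd₂g⟩ := (hadj f g (Ne.symm hgf)).mp ⟨w, hwf, hwg⟩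
  by_cases h₁ : d₁ = d
  · exact h₁ ▸ hd₁g
  by_cases h₂ : d₂ = d
  · exact h₂ ▸ hd₂g
  -- derive a triangle d - d₁ - d₂ - d
  exfalso
  have hd12 : d₁ ≠ d₂ := by
    intro hh
    subst hh
    have : (φ e).1 = (φ f).1 := sym2_eq h₁ hd₁e hde hd₂f hdf
    exact hef (φ.injective (Subtype.ext this))
  have h₁' : G₂.Adj d d₁ := adj_of_edge (φ e).2 (Ne.symm h₁) hde hd₁e
  have h₂' : G₂.Adj d₂ d := adj_of_edge (φ f).2 h₂ hd₂f hdf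
  have h₃' : G₂.Adj d₁ d₂ := adj_of_edge (φ g).2 hd12 hd₁g hd₂g
  exact tri_free' h2 h₁' h₃' h₂'
open SimpleGraph

lemma pendant_other_end {V : Type*} {G : SimpleGraph V} (h1 : G.IsTree)
    (htwo : ∃ e f : G.edgeSet, e ≠ f) (e : G.edgeSet) {v w : V} (hvw : e.1 = s(v, w))
    (hv : ∀ g : G.edgeSet, v ∈ g.1 → g = e) :
    ∃ f : G.edgeSet, f ≠ e ∧ w ∈ f.1 := by
  by_contra hno
  push_neg at hno
  have hw : ∀ g : G.edgeSet, w ∈ g.1 → g = e := by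
    intro g hg
    by_contra hgne
    exact hno g hgne hg
  have hcl : ∀ ⦃x y : V⦄, G.Adj x y → x ∈ ({v, w} : Set V) → y ∈ ({v, w} : Set V) := by
    intro x y hxy hx
    have hmem : x ∈ (⟨s(x, y), hxy⟩ : G.edgeSet).1 := Sym2.mem_mk_left x y
    have heq : (⟨s(x, y), hxy⟩ : G.edgeSet) = e := by
      rcases hx with rfl | rfl
      · exact hv _ hmem
      · exact hw _ hmem
    have : y ∈ e.1 := by
      rw [← heq]; exact Sym2.mem_mk_right x y
    rw [hvw] at this
    rcases Sym2.mem_iff.mp this with rfl | rfl <;> simp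
  obtain ⟨e₁, e₂, hne⟩ := htwo
  have hf : ∃ f : G.edgeSet, f ≠ e := by
    by_cases h : e₁ = e
    · exact ⟨e₂, by rw [← h]; exact hne.symm⟩
    · exact ⟨e₁, h⟩
  obtain ⟨f, hfe⟩ := hf
  rcases f with ⟨fs, hfs⟩
  induction fs using Sym2.ind with
  | _ x y =>
    have hx : x ∈ ({v, w} : Set V) :=
      walk_closed _ hcl (h1.isConnected.preconnected v x).some (by simp)
    have hy : y ∈ ({v, w} : Set V) :=
      walk_closed _ hcl (h1.isConnected.preconnected v y).some (by simp)
    have hxyne : x ≠ y := by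
      intro h
      subst h
      exact (G.not_isDiag_of_mem_edgeSet hfs) (Sym2.mk_isDiag_iff.mpr rfl)
    apply hfe
    apply Subtype.ext
    show s(x,y) = e.1
    rw [hvw]
    rcases hx with rfl | rfl <;> rcases hy with rfl | rfl
    · exact absurd rfl hxyne
    · rfl
    · exact Sym2.eq_swap
    · exact absurd rfl hxyne
lemma aux_spec {V₁ V₂ : Type*} {G₁ : SimpleGraph V₁} {G₂ : SimpleGraph V₂}
    (h1 : G₁.IsTree) (h2 : G₂.IsTree) (φ : G₁.edgeSet ≃ G₂.edgeSet)
    (hadj : ∀ (e f : G₁.edgeSet), e ≠ f →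
      ((∃ v, v ∈ e.1 ∧ v ∈ f.1) ↔ (∃ w, w ∈ (φ e).1 ∧ w ∈ (φ f).1)))
    (htwo : ∃ e f : G₁.edgeSet, e ≠ f) (v : V₁) :
    ∃ c : V₂, (∀ e : G₁.edgeSet, v ∈ e.1 → c ∈ (φ e).1) ∧
      (∀ h : G₂.edgeSet, c ∈ h.1 → v ∈ (φ.symm h).1) := by
  have hadj' : ∀ (e' f' : G₂.edgeSet), e' ≠ f' →
      ((∃ w, w ∈ e'.1 ∧ w ∈ f'.1) ↔ (∃ u, u ∈ (φ.symm e').1 ∧ u ∈ (φ.symm f').1)) := by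
    intro e' f' hne
    have := hadj (φ.symm e') (φ.symm f') (fun h => hne (by simpa using congrArg φ h))
    simpa using this.symm
  by_cases hv2 : ∃ e f : G₁.edgeSet, e ≠ f ∧ v ∈ e.1 ∧ v ∈ f.1
  · obtain ⟨e, f, hef, hve, hvf⟩ := hv2
    obtain ⟨c, hce, hcf⟩ := (hadj e f hef).mp ⟨v, hve, hvf⟩
    refine ⟨c, star_map h2.2 φ hadj hef hve hvf hce hcf, ?_⟩
    -- use star_map in the reverse direction
    have hefs : φ e ≠ φ f := fun h => hef (φ.injective h)
    have := star_map (G₂ := G₁) h1.2 φ.symm hadj' hefs hce hcf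
      (d := v) (by simpa using hve) (by simpa using hvf)
    exact fun h hch => this h hch
  · push_neg at hv2
    obtain ⟨e, hve⟩ := exists_incident h1.isConnected htwo.choose v
    have huniq : ∀ g : G₁.edgeSet, v ∈ g.1 → g = e := by
      intro g hg
      by_contra hne
      exact hv2 g e hne hg hve
    set w := Sym2.Mem.other hve with hw
    have hevw : e.1 = s(v, w) := (Sym2.other_spec hve).symm
    obtain ⟨f, hfe, hwf⟩ := pendant_other_end h1 htwo e hevw huniq
    have hwe : w ∈ e.1 := by rw [hevw]; simp
    obtain ⟨d, hde, hdf⟩ := (hadj e f (Ne.symm hfe)).mp ⟨w, hwe, hwf⟩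
    -- c is the other endpoint of φ e
    set c := Sym2.Mem.other hde with hc
    have hce : c ∈ (φ e).1 := Sym2.other_mem hde
    have hdc : s(d, c) = (φ e).1 := Sym2.other_spec hde
    have hcd : c ≠ d := Sym2.other_ne (G₂.not_isDiag_of_mem_edgeSet (φ e).2) hde
    refine ⟨c, ?_, ?_⟩
    · intro g hvg
      rw [huniq g hvg]
      exact hce
    · intro h hch
      by_cases hhe : h = φ e
      · subst hhe
        simpa using hve
      · exfalso
        have hge : φ.symm h ≠ e := by
          intro hh
          exact hhe (by rw [← hh]; simp)
        obtain ⟨x, hxe, hxg⟩ := (hadj e (φ.symm h) (Ne.symm hge)).mpr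
          ⟨c, hce, by simpa using hch⟩
        have hxvw : x = v ∨ x = w := by rw [hevw] at hxe; exact Sym2.mem_iff.mp hxe
        rcases hxvw with rfl | rfl
        · exact hge (huniq _ hxg)
        · -- x = w : every edge at w maps to an edge through d
          have hd : d ∈ (φ (φ.symm h)).1 := star_map h2.2 φ hadj (Ne.symm hfe) hwe hwf hde hdf _ hxg
          rw [Equiv.apply_symm_apply] at hd
          exact hhe (Subtype.ext (sym2_eq hcd hch hd hce hde))
lemma left_inv_aux {V₁ V₂ : Type*} {G₁ : SimpleGraph V₁} {G₂ : SimpleGraph V₂}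
    (h1 : G₁.IsTree) (htwo : ∃ e f : G₁.edgeSet, e ≠ f)
    (φ : G₁.edgeSet ≃ G₂.edgeSet) (ψ : V₁ → V₂) (ψ' : V₂ → V₁)
    (P1 : ∀ (v : V₁) (e : G₁.edgeSet), v ∈ e.1 → ψ v ∈ (φ e).1)
    (P3 : ∀ (v : V₁) (h : G₂.edgeSet), ψ v ∈ h.1 → v ∈ (φ.symm h).1)
    (P1' : ∀ (u : V₂) (h : G₂.edgeSet), u ∈ h.1 → ψ' u ∈ (φ.symm h).1)
    (P3' : ∀ (u : V₂) (e : G₁.edgeSet), ψ' u ∈ e.1 → u ∈ (φ e).1)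
    (v : V₁) : ψ' (ψ v) = v := by
  obtain ⟨e, hve⟩ := exists_incident h1.isConnected htwo.choose v
  have h₁ : ψ v ∈ (φ e).1 := P1 v e hve
  have h₂ : ψ' (ψ v) ∈ e.1 := by
    have := P1' (ψ v) (φ e) h₁
    simpa using this
  by_contra hne
  by_cases hv2 : ∃ f : G₁.edgeSet, f ≠ e ∧ v ∈ f.1
  · obtain ⟨f, hfe, hvf⟩ := hv2
    have h₃ : ψ' (ψ v) ∈ f.1 := by
      have := P1' (ψ v) (φ f) (P1 v f hvf)
      simpa using this
    exact hfe (Subtype.ext (sym2_eq (Ne.symm hne) hvf h₃ hve h₂))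
  · push_neg at hv2
    have huniq : ∀ g : G₁.edgeSet, v ∈ g.1 → g = e := by
      intro g hg
      by_contra hgne
      exact hv2 g hgne hg
    set w := Sym2.Mem.other hve with hw
    have hevw : e.1 = s(v, w) := (Sym2.other_spec hve).symm
    have hmem : ψ' (ψ v) = v ∨ ψ' (ψ v) = w := by
      rw [hevw] at h₂; exact Sym2.mem_iff.mp h₂
    rcases hmem with h | h
    · exact hne h
    · obtain ⟨f, hfe, hwf⟩ := pendant_other_end h1 htwo e hevw huniq
      have h₄ : ψ v ∈ (φ f).1 := P3' (ψ v) f (by rw [h]; exact hwf)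
      have h₅ : v ∈ f.1 := by
        have := P3 v (φ f) h₄
        simpa using this
      exact hfe (huniq f h₅)
lemma main_case {V₁ V₂ : Type*} {G₁ : SimpleGraph V₁} {G₂ : SimpleGraph V₂}
    (h1 : G₁.IsTree) (h2 : G₂.IsTree) (φ : G₁.edgeSet ≃ G₂.edgeSet)
    (hadj : ∀ (e f : G₁.edgeSet), e ≠ f →
      ((∃ v, v ∈ e.1 ∧ v ∈ f.1) ↔ (∃ w, w ∈ (φ e).1 ∧ w ∈ (φ f).1)))
    (htwo : ∃ e f : G₁.edgeSet, e ≠ f) :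
    Nonempty (G₁ ≃g G₂) := by
  classical
  have hadj' : ∀ (e' f' : G₂.edgeSet), e' ≠ f' →
      ((∃ w, w ∈ e'.1 ∧ w ∈ f'.1) ↔ (∃ u, u ∈ (φ.symm e').1 ∧ u ∈ (φ.symm f').1)) := by
    intro e' f' hne
    have := hadj (φ.symm e') (φ.symm f') (fun h => hne (by simpa using congrArg φ h))
    simpa using this.symm
  have htwo₂ : ∃ e f : G₂.edgeSet, e ≠ f := by
    obtain ⟨e, f, hef⟩ := htwo
    exact ⟨φ e, φ f, fun h => hef (φ.injective h)⟩
  choose ψ P1 P3 using aux_spec h1 h2 φ hadj htwo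
  choose ψ' P1' P3' using aux_spec h2 h1 φ.symm hadj' htwo₂
  have P3'c : ∀ (u : V₂) (e : G₁.edgeSet), ψ' u ∈ e.1 → u ∈ (φ e).1 := by
    intro u e h
    simpa using P3' u e h
  have P1c : ∀ (v : V₁) (e : G₁.edgeSet), v ∈ e.1 → ψ v ∈ ((φ.symm).symm e).1 := by
    intro v e h
    simpa using P1 v e h
  have linv : Function.LeftInverse ψ' ψ :=
    fun v => left_inv_aux h1 htwo φ ψ ψ' P1 P3 P1' P3'c v
  have rinv : Function.RightInverse ψ' ψ :=
    fun u => left_inv_aux h2 htwo₂ φ.symm ψ' ψ P1' P3' P1c P3 u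
  let E : V₁ ≃ V₂ := ⟨ψ, ψ', linv, rinv⟩
  refine ⟨⟨E, ?_⟩⟩
  intro a b
  show G₂.Adj (ψ a) (ψ b) ↔ G₁.Adj a b
  constructor
  · intro h
    have hne : a ≠ b := fun hh => h.ne (by rw [hh])
    set h' : G₂.edgeSet := ⟨s(ψ a, ψ b), h⟩ with hh'
    have ha : a ∈ (φ.symm h').1 := P3 a h' (Sym2.mem_mk_left _ _)
    have hb : b ∈ (φ.symm h').1 := P3 b h' (Sym2.mem_mk_right _ _)
    have : (φ.symm h').1 = s(a, b) := (Sym2.mem_and_mem_iff hne).mp ⟨ha, hb⟩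
    have := (φ.symm h').2
    rw [‹(φ.symm h').1 = s(a, b)›] at this
    exact G₁.mem_edgeSet.mp this
  · intro h
    set e : G₁.edgeSet := ⟨s(a, b), h⟩ with he
    have ha : ψ a ∈ (φ e).1 := P1 a e (Sym2.mem_mk_left _ _)
    have hb : ψ b ∈ (φ e).1 := P1 b e (Sym2.mem_mk_right _ _)
    have hne : ψ a ≠ ψ b := fun hh => h.ne (E.injective hh)
    have heq : (φ e).1 = s(ψ a, ψ b) := (Sym2.mem_and_mem_iff hne).mp ⟨ha, hb⟩
    have := (φ e).2
    rw [heq] at this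
    exact G₂.mem_edgeSet.mp this
lemma edgeless_eq {V : Type*} {G : SimpleGraph V} (hc : G.Connected)
    (hE : IsEmpty G.edgeSet) (v w : V) : v = w := by
  have := walk_closed ({v} : Set V) (fun x y hxy _ => (hE.false ⟨s(x,y), hxy⟩).elim)
    (hc.preconnected v w).some rfl
  exact (Set.mem_singleton_iff.mp this).symm

lemma one_edge_mem {V : Type*} {G : SimpleGraph V} (hc : G.Connected)
    {a b : V} (he : s(a, b) ∈ G.edgeSet)
    (huniq : ∀ f : G.edgeSet, f.1 = s(a, b)) (v : V) : v = a ∨ v = b := by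
  have hcl : ∀ ⦃x y : V⦄, G.Adj x y → x ∈ ({a, b} : Set V) → y ∈ ({a, b} : Set V) := by
    intro x y hxy hx
    have := huniq ⟨s(x, y), hxy⟩
    have hy : y ∈ s(a, b) := by rw [← this]; exact Sym2.mem_mk_right x y
    rcases Sym2.mem_iff.mp hy with rfl | rfl <;> simp
  have := walk_closed _ hcl (hc.preconnected a v).some (by simp)
  simpa using this

theorem stmt_16' {V₁ V₂ : Type*} [Fintype V₁] [Fintype V₂]
    (G₁ : SimpleGraph V₁) (G₂ : SimpleGraph V₂)
    (h1 : G₁.IsTree) (h2 : G₂.IsTree)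
    (φ : G₁.edgeSet ≃ G₂.edgeSet)
    (hφ : ∀ E : Set G₁.edgeSet,
      IsPathEdgeSet G₁ (Subtype.val '' E) ↔ IsPathEdgeSet G₂ (Subtype.val '' (φ '' E))) :
    Nonempty (G₁ ≃g G₂) := by
  classical
  by_cases htwo : ∃ e f : G₁.edgeSet, e ≠ f
  · -- derive the adjacency transfer from hφ
    have hadj : ∀ (e f : G₁.edgeSet), e ≠ f →
        ((∃ v, v ∈ e.1 ∧ v ∈ f.1) ↔ (∃ w, w ∈ (φ e).1 ∧ w ∈ (φ f).1)) := by
      intro e f hef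
      have hne1 : e.1 ≠ f.1 := fun h => hef (Subtype.ext h)
      have hne2 : (φ e).1 ≠ (φ f).1 := fun h => hef (φ.injective (Subtype.ext h))
      have key := hφ {e, f}
      rw [Set.image_pair, Set.image_pair, Set.image_pair] at key
      constructor
      · rintro ⟨x, hx1, hx2⟩
        exact adj_of_path2 (key.mp (path2_of_adj e.2 f.2 hne1 hx1 hx2)) hne2
      · rintro ⟨x, hx1, hx2⟩
        exact adj_of_path2 (key.mpr (path2_of_adj (φ e).2 (φ f).2 hne2 hx1 hx2)) hne1
    exact main_case h1 h2 φ hadj htwo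
  · push_neg at htwo
    by_cases hone : Nonempty G₁.edgeSet
    · obtain ⟨e₁⟩ := hone
      have huniq1 : ∀ f : G₁.edgeSet, f = e₁ := fun f => htwo f e₁
      have huniq2 : ∀ f : G₂.edgeSet, f = φ e₁ := by
        intro f
        have := htwo (φ.symm f) e₁
        calc f = φ (φ.symm f) := by simp
        _ = φ e₁ := by rw [this]
      obtain ⟨a, b, hab⟩ : ∃ a b, e₁.1 = s(a, b) := by
        induction e₁.1 using Sym2.ind with
        | _ x y => exact ⟨x, y, rfl⟩
      obtain ⟨a', b', hab'⟩ : ∃ a' b', (φ e₁).1 = s(a', b') := by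
        induction (φ e₁).1 using Sym2.ind with
        | _ x y => exact ⟨x, y, rfl⟩
      have hne_ab : a ≠ b := by
        intro h
        exact G₁.not_isDiag_of_mem_edgeSet e₁.2 (by rw [hab, h]; exact Sym2.mk_isDiag_iff.mpr rfl)
      have hne_ab' : a' ≠ b' := by
        intro h
        exact G₂.not_isDiag_of_mem_edgeSet (φ e₁).2
          (by rw [hab', h]; exact Sym2.mk_isDiag_iff.mpr rfl)
      have hmem1 : ∀ v, v = a ∨ v = b :=
        one_edge_mem h1.isConnected (hab ▸ e₁.2) (fun f => by rw [huniq1 f, hab])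
      have hmem2 : ∀ v, v = a' ∨ v = b' :=
        one_edge_mem h2.isConnected (hab' ▸ (φ e₁).2) (fun f => by rw [huniq2 f, hab'])
      have adj1 : ∀ v w : V₁, G₁.Adj v w ↔ v ≠ w := by
        intro v w
        refine ⟨Adj.ne, fun hne => ?_⟩
        have he := G₁.mem_edgeSet.mp (hab ▸ e₁.2)
        rcases hmem1 v with rfl | rfl <;> rcases hmem1 w with rfl | rfl
        · exact absurd rfl hne
        · exact he
        · exact he.symm
        · exact absurd rfl hne
      have adj2 : ∀ v w : V₂, G₂.Adj v w ↔ v ≠ w := by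
        intro v w
        refine ⟨Adj.ne, fun hne => ?_⟩
        have he := G₂.mem_edgeSet.mp (hab' ▸ (φ e₁).2)
        rcases hmem2 v with rfl | rfl <;> rcases hmem2 w with rfl | rfl
        · exact absurd rfl hne
        · exact he
        · exact he.symm
        · exact absurd rfl hne
      refine ⟨⟨⟨fun v => if v = a then a' else b', fun u => if u = a' then a else b,
        ?_, ?_⟩, ?_⟩⟩
      · intro v
        rcases hmem1 v with rfl | rfl
        · simp
        · simp [Ne.symm hne_ab, Ne.symm hne_ab']
      · intro u
        rcases hmem2 u with rfl | rfl
        · simp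
        · simp [Ne.symm hne_ab, Ne.symm hne_ab']
      · intro v w
        simp only [Equiv.coe_fn_mk]
        rw [adj1, adj2]
        rcases hmem1 v with rfl | rfl <;> rcases hmem1 w with rfl | rfl <;>
          simp [hne_ab, hne_ab', Ne.symm hne_ab, Ne.symm hne_ab']
    · have hE2 : IsEmpty G₂.edgeSet := ⟨fun h => hone ⟨φ.symm h⟩⟩
      have hE1 : IsEmpty G₁.edgeSet := ⟨fun h => hone ⟨h⟩⟩
      have hv1 : ∀ v w : V₁, v = w := edgeless_eq h1.isConnected hE1
      have hv2 : ∀ v w : V₂, v = w := edgeless_eq h2.isConnected hE2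
      obtain ⟨x₁⟩ := h1.isConnected.nonempty
      obtain ⟨x₂⟩ := h2.isConnected.nonempty
      refine ⟨⟨⟨fun _ => x₂, fun _ => x₁, fun v => hv1 _ _, fun u => hv2 _ _⟩, ?_⟩⟩
      intro a b
      constructor
      · intro h
        exact (hE2.false ⟨s(x₂, x₂), h⟩).elim
      · intro h
        exact (hE1.false ⟨s(a, b), h⟩).elim

/-- If two finite trees admit a bijection between their edge sets sending edge sets of paths
to edge sets of paths (in both directions), then the trees are isomorphic. -/
theorem stmt_16 {V₁ V₂ : Type*} [Fintype V₁] [Fintype V₂]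
    (G₁ : SimpleGraph V₁) (G₂ : SimpleGraph V₂)
    (h1 : G₁.IsTree) (h2 : G₂.IsTree)
    (φ : G₁.edgeSet ≃ G₂.edgeSet)
    (hφ : ∀ E : Set G₁.edgeSet,
      IsPathEdgeSet G₁ (Subtype.val '' E) ↔ IsPathEdgeSet G₂ (Subtype.val '' (φ '' E))) :
    Nonempty (G₁ ≃g G₂) := by
  exact stmt_16' G₁ G₂ h1 h2 φ hφ
end
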